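/- arXiv:2301.02605 — 9 statements merged into one kernel-verified Lean document; each statement's English description precedes it below -/
import Mathlib

section
/- Let d ≥ 2 be an integer, let V : ℝⁿ → ℝ be of class C¹, and let u : (0,∞) → ℝⁿ be a radial profile for V such that u(r) converges to some point u_∞ ∈ ℝⁿ as r → +∞. Then u'(r) → 0 as r → +∞, and moreover |u'(r)|²/2 − V(u(r)) → −V(u_∞) as r → +∞. -/
open Set Filter Topology

/-- If a radial profile `u` for a `C¹` potential `V` converges to
some point `u∞` as `r → +∞`, then `u'(r) → 0` and
`‖u'(r)‖²/2 − V(u(r)) → −V(u∞)` as `r → +∞`. -/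
theorem radial_profile_derivative_tendsto_zero_at_infinity
    {n : ℕ} (hn : 1 ≤ n) {d : ℕ} (hd : 2 ≤ d)
    (V : EuclideanSpace ℝ (Fin n) → ℝ) (hV : ContDiff ℝ 1 V)
    (u u' : ℝ → EuclideanSpace ℝ (Fin n))
    (hu : ∀ r, 0 < r → HasDerivAt u (u' r) r)
    (hu' : ∀ r, 0 < r → HasDerivAt u'
      (-(((d : ℝ) - 1) / r) • u' r + gradient V (u r)) r)
    (uinf : EuclideanSpace ℝ (Fin n))
    (hlim : Tendsto u atTop (nhds uinf)) :
    Tendsto u' atTop (nhds 0) ∧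
    Tendsto (fun r => ‖u' r‖ ^ 2 / 2 - V (u r)) atTop (nhds (-V uinf)) := by
  have hVd : Differentiable ℝ V := hV.differentiable one_ne_zero
  set c : ℝ := (d : ℝ) - 1 with hc_def
  have hc1 : (1 : ℝ) ≤ c := by
    have h2 : (2 : ℝ) ≤ (d : ℝ) := by exact_mod_cast hd
    simp only [hc_def]; linarith
  have hc0 : (0 : ℝ) ≤ c := by linarith
  set w : ℝ → EuclideanSpace ℝ (Fin n) :=
    fun r => -(c / r) • u' r + gradient V (u r) with hw_def
  have hu'' : ∀ r, 0 < r → HasDerivAt u' (w r) r := hu'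
  -- derivative of V ∘ u
  have hVu : ∀ r, 0 < r →
      HasDerivAt (fun s => V (u s)) ((inner ℝ (gradient V (u r)) (u' r) : ℝ)) r := by
    intro r hr
    have hg : HasGradientAt V (gradient V (u r)) (u r) := (hVd (u r)).hasGradientAt
    have := hg.hasFDerivAt.comp_hasDerivAt r (hu r hr)
    have h35 := this
    simp [InnerProductSpace.toDual_apply_apply] at h35 ⊢
    exact h35
  -- derivative of the energy
  have hE : ∀ r, 0 < r →
      HasDerivAt (fun s => ‖u' s‖ ^ 2 / 2 - V (u s)) (-(c / r) * ‖u' r‖ ^ 2) r := by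
    intro r hr
    have h1 : HasDerivAt (fun s => ((inner ℝ (u' s) (u' s) : ℝ)))
        ((inner ℝ (u' r) (w r) : ℝ) + (inner ℝ (w r) (u' r) : ℝ)) r := (hu'' r hr).inner ℝ (hu'' r hr)
    have h1' : HasDerivAt (fun s => ‖u' s‖ ^ 2)
        ((inner ℝ (u' r) (w r) : ℝ) + (inner ℝ (w r) (u' r) : ℝ)) r := by
      have : (fun s => ((inner ℝ (u' s) (u' s) : ℝ))) = fun s => ‖u' s‖ ^ 2 := by
        funext s; exact real_inner_self_eq_norm_sq (u' s)
      rwa [this] at h1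
    have h2 := (h1'.div_const 2).sub (hVu r hr)
    refine h2.congr_deriv ?_
    have hsym : (inner ℝ (u' r) (w r) : ℝ) = (inner ℝ (w r) (u' r) : ℝ) := real_inner_comm _ _
    rw [hsym]
    have : (inner ℝ (w r) (u' r) : ℝ) = -(c / r) * (inner ℝ (u' r) (u' r) : ℝ) + (inner ℝ (gradient V (u r)) (u' r) : ℝ) := by
      simp [hw_def, inner_add_left, real_inner_smul_left, Finset.mul_sum, mul_assoc]
    rw [this, real_inner_self_eq_norm_sq]
    ring
  -- the energy is antitone on `[1, ∞)`
  have hmono : AntitoneOn (fun s => ‖u' s‖ ^ 2 / 2 - V (u s)) (Ici 1) := by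
    apply antitoneOn_of_deriv_nonpos (convex_Ici 1)
    · intro x hx
      exact ((hE x (lt_of_lt_of_le one_pos hx)).continuousAt).continuousWithinAt
    · intro x hx
      rw [interior_Ici] at hx
      exact (hE x (lt_trans one_pos hx)).differentiableAt.differentiableWithinAt
    · intro x hx
      rw [interior_Ici] at hx
      have hx0 : (0 : ℝ) < x := lt_trans one_pos hx
      rw [(hE x hx0).deriv]
      have h1 : 0 ≤ c / x := div_nonneg hc0 hx0.le
      have h2 : 0 ≤ ‖u' x‖ ^ 2 := sq_nonneg _
      nlinarith
  have hVlim : Tendsto (fun r => V (u r)) atTop (𝓝 (V uinf)) :=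
    (hV.continuous.tendsto uinf).comp hlim
  set K : ℝ := (‖u' 1‖ ^ 2 / 2 - V (u 1)) + (V uinf + 1) with hK_def
  have hB2 : ∀ᶠ r in atTop, ‖u' r‖ ^ 2 ≤ 2 * K := by
    have h1 : ∀ᶠ r in atTop, V (u r) < V uinf + 1 :=
      hVlim.eventually (gt_mem_nhds (lt_add_one _))
    filter_upwards [h1, eventually_ge_atTop (1 : ℝ)] with r h1 hr1
    have := hmono (self_mem_Ici) (mem_Ici.2 hr1) hr1
    simp only [hK_def]
    nlinarith
  set B : ℝ := Real.sqrt (2 * K) with hB_def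
  have hB : ∀ᶠ r in atTop, ‖u' r‖ ≤ B := by
    filter_upwards [hB2] with r h
    have := Real.sqrt_le_sqrt h
    rwa [Real.sqrt_sq (norm_nonneg _)] at this
  -- gradient is continuous
  have hgradcont : Continuous (gradient V) := by
    have h1 : Continuous (fderiv ℝ V) := hV.continuous_fderiv one_ne_zero
    exact (InnerProductSpace.toDual ℝ _).symm.continuous.comp h1
  have hglim : Tendsto (fun r => gradient V (u r)) atTop (𝓝 (gradient V uinf)) :=
    (hgradcont.tendsto uinf).comp hlim
  set M : ℝ := c * B + (‖gradient V uinf‖ + 1) with hM_def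
  have hM0 : 0 < M := by
    have h1 : 0 ≤ c * B := mul_nonneg hc0 (Real.sqrt_nonneg _)
    have h2 : 0 ≤ ‖gradient V uinf‖ := norm_nonneg _
    simp only [hM_def]; linarith
  have hMbound : ∀ᶠ r in atTop, ‖w r‖ ≤ M := by
    have h1 : ∀ᶠ r in atTop, ‖gradient V (u r)‖ < ‖gradient V uinf‖ + 1 :=
      hglim.norm.eventually (gt_mem_nhds (lt_add_one _))
    filter_upwards [h1, hB, eventually_ge_atTop (1 : ℝ)] with r h1 hBr hr1
    have hr0 : (0 : ℝ) < r := lt_of_lt_of_le one_pos hr1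
    have hnorm1 : ‖(-(c / r) • u' r : EuclideanSpace ℝ (Fin n))‖ = (c / r) * ‖u' r‖ := by
      rw [norm_smul]
      congr 1
      rw [Real.norm_eq_abs, abs_neg, abs_of_nonneg (div_nonneg hc0 hr0.le)]
    have hcr : c / r ≤ c := div_le_self hc0 hr1
    have h3 : (c / r) * ‖u' r‖ ≤ c * B :=
      mul_le_mul hcr hBr (norm_nonneg _) hc0
    calc ‖w r‖ ≤ ‖(-(c / r) • u' r : EuclideanSpace ℝ (Fin n))‖ + ‖gradient V (u r)‖ :=
          norm_add_le _ _
      _ ≤ c * B + (‖gradient V uinf‖ + 1) := by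
          rw [hnorm1]; exact add_le_add h3 h1.le
  -- Barbalat-type argument: u' → 0
  have hu'0 : Tendsto u' atTop (𝓝 0) := by
    rw [NormedAddCommGroup.tendsto_nhds_zero]
    intro ε hε
    set δ : ℝ := ε / (2 * M) with hδ_def
    have hδ : 0 < δ := div_pos hε (by linarith)
    have hMδ : M * δ = ε / 2 := by
      rw [hδ_def]
      field_simp
    have hclose : ∀ᶠ r in atTop, ‖u r - uinf‖ < δ * ε / 8 := by
      have h : Tendsto (fun r => u r - uinf) atTop (𝓝 0) := by
        simpa using hlim.sub (tendsto_const_nhds (x := uinf))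
      have h0 : Tendsto (fun r => ‖u r - uinf‖) atTop (𝓝 0) := by
        simpa using h.norm
      have h8 : 0 < δ * ε / 8 := by positivity
      exact h0.eventually (gt_mem_nhds h8)
    obtain ⟨R, hR⟩ := (hMbound.and hclose).exists_forall_of_atTop
    filter_upwards [eventually_ge_atTop (max R 1)] with r hr
    have hrR : R ≤ r := le_trans (le_max_left _ _) hr
    have hr1 : (1 : ℝ) ≤ r := le_trans (le_max_right _ _) hr
    have hr0 : (0 : ℝ) < r := lt_of_lt_of_le one_pos hr1
    -- bound on `u' s - u' r` on `[r, r+δ]`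
    have step1 : ∀ s ∈ Icc r (r + δ), ‖u' s - u' r‖ ≤ M * (s - r) := by
      apply norm_image_sub_le_of_norm_deriv_le_segment'
        (f := u') (f' := w) (a := r) (b := r + δ)
      · intro s hs
        have hs0 : 0 < s := lt_of_lt_of_le hr0 hs.1
        exact (hu'' s hs0).hasDerivWithinAt
      · intro s hs
        exact (hR s (le_trans hrR hs.1)).1
    have step1' : ∀ s ∈ Ico r (r + δ), ‖u' s - u' r‖ ≤ M * δ := by
      intro s hs
      calc ‖u' s - u' r‖ ≤ M * (s - r) := step1 s ⟨hs.1, hs.2.le⟩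
        _ ≤ M * δ := by
            apply mul_le_mul_of_nonneg_left _ hM0.le
            linarith [hs.2]
    -- Taylor-type bound
    have step2 : ‖u (r + δ) - u r - δ • u' r‖ ≤ M * δ * δ := by
      have hderiv : ∀ s ∈ Icc r (r + δ),
          HasDerivWithinAt (fun s => u s - s • u' r) (u' s - u' r) (Icc r (r + δ)) s := by
        intro s hs
        have hs0 : 0 < s := lt_of_lt_of_le hr0 hs.1
        have h1 : HasDerivAt (fun s : ℝ => s • u' r) ((1 : ℝ) • u' r) s :=
          (hasDerivAt_id s).smul_const (u' r)
        have h2 := (hu s hs0).sub h1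
        rw [one_smul] at h2
        exact h2.hasDerivWithinAt
      have key := norm_image_sub_le_of_norm_deriv_le_segment' hderiv step1'
        (r + δ) ⟨by linarith, le_rfl⟩
      have heq : u (r + δ) - (r + δ) • u' r - (u r - r • u' r)
          = u (r + δ) - u r - δ • u' r := by
        rw [add_smul]; abel
      rw [heq] at key
      calc ‖u (r + δ) - u r - δ • u' r‖ ≤ M * δ * (r + δ - r) := key
        _ = M * δ * δ := by ring
    -- conclude
    have hur : ‖u r - uinf‖ < δ * ε / 8 := (hR r hrR).2
    have hurδ : ‖u (r + δ) - uinf‖ < δ * ε / 8 := (hR (r + δ) (by linarith)).2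
    have hdiff : ‖u (r + δ) - u r‖ < δ * ε / 4 := by
      have : u (r + δ) - u r = (u (r + δ) - uinf) - (u r - uinf) := by abel
      rw [this]
      calc ‖(u (r + δ) - uinf) - (u r - uinf)‖
          ≤ ‖u (r + δ) - uinf‖ + ‖u r - uinf‖ := norm_sub_le _ _
        _ < δ * ε / 8 + δ * ε / 8 := add_lt_add hurδ hur
        _ = δ * ε / 4 := by ring
    have hsmul : ‖(δ • u' r : EuclideanSpace ℝ (Fin n))‖ = δ * ‖u' r‖ := by
      rw [norm_smul, Real.norm_eq_abs, abs_of_pos hδ]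
    have hkey : δ * ‖u' r‖ < δ * ε / 4 + M * δ * δ := by
      rw [← hsmul]
      calc ‖(δ • u' r : EuclideanSpace ℝ (Fin n))‖
          = ‖(u (r + δ) - u r) - (u (r + δ) - u r - δ • u' r)‖ := by
            congr 1; abel
        _ ≤ ‖u (r + δ) - u r‖ + ‖u (r + δ) - u r - δ • u' r‖ := norm_sub_le _ _
        _ < δ * ε / 4 + M * δ * δ := by
            exact add_lt_add_of_lt_of_le hdiff step2
    have : δ * ‖u' r‖ < δ * ε / 4 + (ε / 2) * δ := by
      rwa [hMδ] at hkey
    have h3 : δ * ‖u' r‖ < δ * (3 * ε / 4) := by linarith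
    have h4 : ‖u' r‖ < 3 * ε / 4 := lt_of_mul_lt_mul_left h3 hδ.le
    linarith
  refine ⟨hu'0, ?_⟩
  have h1 : Tendsto (fun r => ‖u' r‖ ^ 2 / 2) atTop (𝓝 0) := by
    have h := (hu'0.norm.pow 2).div_const 2
    simpa using h
  have h2 := h1.sub hVlim
  simpa using h2
end

section
/- Let d ≥ 2 be an integer, let A be a symmetric positive definite linear map of ℝⁿ, and let u : (0,∞) → ℝⁿ be a C² solution of the linear system u''(r) = −((d−1)/r)·u'(r) + A·u(r) that is not identically zero. Then the function r ↦ r^{d−1}·⟨u(r), u'(r)⟩ is strictly increasing on (0,∞). -/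
open Set Filter

/-- For a symmetric positive definite linear map `A` of `ℝⁿ` and a
`C²` solution `u` of the linear system `u'' = −((d−1)/r)·u' + A·u` on `(0,∞)`
that is not identically zero, the function `r ↦ r^(d−1)·⟨u r, u' r⟩` is
strictly increasing on `(0,∞)`. -/
theorem linearized_radial_system_Q_strictMono
    {n : ℕ} (hn : 1 ≤ n) {d : ℕ} (hd : 2 ≤ d)
    (A : EuclideanSpace ℝ (Fin n) →ₗ[ℝ] EuclideanSpace ℝ (Fin n))
    (hA_symm : LinearMap.IsSymmetric A)
    (hA_pos : ∀ x : EuclideanSpace ℝ (Fin n), x ≠ 0 → 0 < (inner ℝ (A x) x : ℝ))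
    (u u' : ℝ → EuclideanSpace ℝ (Fin n))
    (hu : ∀ r, 0 < r → HasDerivAt u (u' r) r)
    (hu' : ∀ r, 0 < r → HasDerivAt u'
      (-(((d : ℝ) - 1) / r) • u' r + A (u r)) r)
    (hne : ∃ r, 0 < r ∧ u r ≠ 0) :
    StrictMonoOn (fun s => s ^ (d - 1) * (inner ℝ (u s) (u' s) : ℝ)) (Ioi 0) := by
  classical
  have hd' : (2 : ℝ) ≤ (d : ℝ) := by exact_mod_cast hd
  set c : ℝ := (d : ℝ) - 1 with hcdef
  have hc0 : 0 ≤ c := by rw [hcdef]; linarith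
  let Ac : EuclideanSpace ℝ (Fin n) →L[ℝ] EuclideanSpace ℝ (Fin n) :=
    LinearMap.toContinuousLinearMap A
  have hAc : ∀ x, A x = Ac x := fun x => rfl
  have hv : ∀ r, 0 < r → HasDerivAt (fun r => (u r, u' r))
      ((u' r, -(c / r) • u' r + A (u r)) :
        EuclideanSpace ℝ (Fin n) × EuclideanSpace ℝ (Fin n)) r := fun r hr =>
    (hu r hr).prodMk (hu' r hr)
  -- norm bound on the derivative
  have hKbound : ∀ a : ℝ, 0 < a → ∀ x : ℝ, a ≤ x →
      ‖((u' x, -(c / x) • u' x + A (u x)) :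
          EuclideanSpace ℝ (Fin n) × EuclideanSpace ℝ (Fin n))‖
        ≤ (1 + c / a + ‖Ac‖) * ‖((u x, u' x) :
          EuclideanSpace ℝ (Fin n) × EuclideanSpace ℝ (Fin n))‖ := by
    intro a ha x hax
    have hx : 0 < x := lt_of_lt_of_le ha hax
    have h1 : ‖u x‖ ≤ ‖((u x, u' x) :
        EuclideanSpace ℝ (Fin n) × EuclideanSpace ℝ (Fin n))‖ := by
      rw [Prod.norm_def]; exact le_max_left _ _
    have h2 : ‖u' x‖ ≤ ‖((u x, u' x) :
        EuclideanSpace ℝ (Fin n) × EuclideanSpace ℝ (Fin n))‖ := by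
      rw [Prod.norm_def]; exact le_max_right _ _
    have hM : (0:ℝ) ≤ ‖((u x, u' x) :
        EuclideanSpace ℝ (Fin n) × EuclideanSpace ℝ (Fin n))‖ := norm_nonneg _
    set M := ‖((u x, u' x) :
        EuclideanSpace ℝ (Fin n) × EuclideanSpace ℝ (Fin n))‖
    have hca : 0 ≤ c / a := div_nonneg hc0 ha.le
    have hAcn : (0:ℝ) ≤ ‖Ac‖ := norm_nonneg _
    have hdiv : c / x ≤ c / a := by gcongr
    have hsecond : ‖-(c / x) • u' x + A (u x)‖ ≤ (c / a) * M + ‖Ac‖ * M := by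
      calc ‖-(c / x) • u' x + A (u x)‖ ≤ ‖-(c / x) • u' x‖ + ‖A (u x)‖ := norm_add_le _ _
        _ = (c / x) * ‖u' x‖ + ‖Ac (u x)‖ := by
            rw [norm_smul, hAc, Real.norm_eq_abs, abs_neg,
              abs_of_nonneg (div_nonneg hc0 hx.le)]
        _ ≤ (c / a) * M + ‖Ac‖ * M := by
            have hA1 : ‖Ac (u x)‖ ≤ ‖Ac‖ * M :=
              (Ac.le_opNorm _).trans (mul_le_mul_of_nonneg_left h1 hAcn)
            have hA2 : (c / x) * ‖u' x‖ ≤ (c / a) * M :=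
              mul_le_mul hdiv h2 (norm_nonneg _) hca
            linarith
    rw [Prod.norm_def]
    apply max_le
    · simp only
      nlinarith
    · simp only
      nlinarith
  -- unique continuation
  have hvanish : ∀ r₀, 0 < r₀ → u r₀ = 0 → u' r₀ = 0 → ∀ t, 0 < t → u t = 0 := by
    intro r₀ hr₀ h0 h0' t ht
    rcases le_total r₀ t with hle | hle
    · have key := norm_le_gronwallBound_of_norm_deriv_right_le
        (f := fun r => ((u r, u' r) :
            EuclideanSpace ℝ (Fin n) × EuclideanSpace ℝ (Fin n)))
        (f' := fun r => (u' r, -(c / r) • u' r + A (u r))) (δ := 0)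
        (K := 1 + c / r₀ + ‖Ac‖) (ε := 0) (a := r₀) (b := t)
        (fun x hx => ((hv x (lt_of_lt_of_le hr₀ hx.1)).continuousAt).continuousWithinAt)
        (fun x hx => (hv x (lt_of_lt_of_le hr₀ hx.1)).hasDerivWithinAt)
        (by simp [h0, h0', Prod.norm_def])
        (fun x hx => by rw [add_zero]; exact hKbound r₀ hr₀ x hx.1)
      have h := key t (right_mem_Icc.2 hle)
      rw [gronwallBound_ε0_δ0] at h
      have := norm_le_zero_iff.1 h
      exact (Prod.mk_eq_zero.1 this).1
    · have hw : ∀ τ ∈ Icc t r₀, HasDerivAt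
          (fun τ => ((u (t + r₀ - τ), u' (t + r₀ - τ)) :
            EuclideanSpace ℝ (Fin n) × EuclideanSpace ℝ (Fin n)))
          ((-1 : ℝ) • (u' (t + r₀ - τ),
            -(c / (t + r₀ - τ)) • u' (t + r₀ - τ) + A (u (t + r₀ - τ)))) τ := by
        intro τ hτ
        have hs : 0 < t + r₀ - τ := by
          have := hτ.2; linarith
        have hlin : HasDerivAt (fun τ : ℝ => t + r₀ - τ) (-1) τ := by
          simpa using (hasDerivAt_id τ).const_sub (t + r₀)
        simpa [Function.comp_def] using (hv _ hs).scomp τ hlin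
      have key := norm_le_gronwallBound_of_norm_deriv_right_le
        (f := fun τ => ((u (t + r₀ - τ), u' (t + r₀ - τ)) :
            EuclideanSpace ℝ (Fin n) × EuclideanSpace ℝ (Fin n)))
        (f' := fun τ => (-1 : ℝ) • (u' (t + r₀ - τ),
            -(c / (t + r₀ - τ)) • u' (t + r₀ - τ) + A (u (t + r₀ - τ)))) (δ := 0)
        (K := 1 + c / t + ‖Ac‖) (ε := 0) (a := t) (b := r₀)
        (fun τ hτ => ((hw τ hτ).continuousAt).continuousWithinAt)
        (fun τ hτ => (hw τ (Ico_subset_Icc_self hτ)).hasDerivWithinAt)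
        (by simp [show t + r₀ - t = r₀ by ring, h0, h0', Prod.norm_def])
        (fun τ hτ => by
          have hts : t ≤ t + r₀ - τ := by have := hτ.2; linarith
          have hb := hKbound t ht (t + r₀ - τ) hts
          calc ‖(-1 : ℝ) • ((u' (t + r₀ - τ),
                -(c / (t + r₀ - τ)) • u' (t + r₀ - τ) + A (u (t + r₀ - τ))) :
                EuclideanSpace ℝ (Fin n) × EuclideanSpace ℝ (Fin n))‖
              = ‖((u' (t + r₀ - τ),
                -(c / (t + r₀ - τ)) • u' (t + r₀ - τ) + A (u (t + r₀ - τ))) :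
                EuclideanSpace ℝ (Fin n) × EuclideanSpace ℝ (Fin n))‖ := by
                rw [norm_smul]; simp
            _ ≤ (1 + c / t + ‖Ac‖) * ‖((u (t + r₀ - τ), u' (t + r₀ - τ)) :
                EuclideanSpace ℝ (Fin n) × EuclideanSpace ℝ (Fin n))‖ + 0 := by
                rw [add_zero]; exact hb)
      have h := key r₀ (right_mem_Icc.2 hle)
      rw [gronwallBound_ε0_δ0] at h
      simpa using (Prod.mk_eq_zero.1 (norm_le_zero_iff.1 h)).1
  -- nonnegativity of the quadratic form
  have hinnerA : ∀ x : EuclideanSpace ℝ (Fin n), 0 ≤ (inner ℝ (A x) x : ℝ) := by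
    intro x
    rcases eq_or_ne x 0 with h | h
    · simp [h]
    · exact (hA_pos x h).le
  -- derivative of Q
  have hQderiv : ∀ s, 0 < s → HasDerivAt
      (fun s => s ^ (d - 1) * (inner ℝ (u s) (u' s) : ℝ))
      (s ^ (d - 1) * (‖u' s‖ ^ 2 + (inner ℝ (A (u s)) (u s) : ℝ))) s := by
    intro s hs
    have hs' : s ≠ 0 := ne_of_gt hs
    have hcast : ((d - 1 : ℕ) : ℝ) = c := by
      rw [hcdef]; push_cast [Nat.cast_sub (by omega : 1 ≤ d)]; ring
    have hpow : HasDerivAt (fun x : ℝ => x ^ (d - 1)) (c * s ^ (d - 2)) s := by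
      have h := hasDerivAt_pow (d - 1) s
      rw [show d - 1 - 1 = d - 2 by omega, hcast] at h
      exact h
    have hinner := (hu s hs).inner (𝕜 := ℝ) (hu' s hs)
    have hmul := hpow.mul hinner
    convert hmul using 1
    · rfl
    · rfl
    · rfl
    have hiadd : (inner ℝ (u s) (-(c / s) • u' s + A (u s)) : ℝ)
        = -(c / s) * (inner ℝ (u s) (u' s) : ℝ) + (inner ℝ (u s) (A (u s)) : ℝ) := by
      rw [inner_add_right, real_inner_smul_right]
    have hnorm : (inner ℝ (u' s) (u' s) : ℝ) = ‖u' s‖ ^ 2 := real_inner_self_eq_norm_sq _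
    have hsymm : (inner ℝ (A (u s)) (u s) : ℝ) = (inner ℝ (u s) (A (u s)) : ℝ) :=
      real_inner_comm _ _
    have hpow2 : s ^ (d - 1) = s ^ (d - 2) * s := by
      rw [show d - 1 = (d - 2) + 1 by omega, pow_succ]
    rw [hiadd, hnorm, hsymm, hpow2]
    field_simp
    ring
  have hQ'nonneg : ∀ s : ℝ, 0 < s →
      0 ≤ s ^ (d - 1) * (‖u' s‖ ^ 2 + (inner ℝ (A (u s)) (u s) : ℝ)) := fun s hs =>
    mul_nonneg (pow_nonneg hs.le _) (add_nonneg (sq_nonneg _) (hinnerA _))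
  have hQmono : MonotoneOn (fun s => s ^ (d - 1) * (inner ℝ (u s) (u' s) : ℝ)) (Ioi 0) := by
    apply monotoneOn_of_deriv_nonneg (convex_Ioi 0)
    · exact fun x hx => ((hQderiv x hx).continuousAt).continuousWithinAt
    · intro x hx
      rw [interior_Ioi] at hx
      exact ((hQderiv x hx).differentiableAt).differentiableWithinAt
    · intro x hx
      rw [interior_Ioi] at hx
      rw [(hQderiv x hx).deriv]
      exact hQ'nonneg x hx
  intro a ha b hb hab
  rcases (hQmono ha hb hab.le).lt_or_eq with h | h
  · exact h
  · exfalso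
    have ha0 : (0 : ℝ) < a := ha
    set x₀ : ℝ := (a + b) / 2 with hx₀def
    have hax : a < x₀ := by rw [hx₀def]; linarith
    have hxb : x₀ < b := by rw [hx₀def]; linarith
    have hx₀ : 0 < x₀ := lt_trans ha0 hax
    have hconst : (fun s => s ^ (d - 1) * (inner ℝ (u s) (u' s) : ℝ)) =ᶠ[nhds x₀]
        (fun _ => a ^ (d - 1) * (inner ℝ (u a) (u' a) : ℝ)) := by
      filter_upwards [Ioo_mem_nhds hax hxb] with y hy
      have hy0 : (0 : ℝ) < y := lt_trans ha0 hy.1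
      have hya := hQmono ha hy0 hy.1.le
      have hyb := hQmono hy0 hb hy.2.le
      simp only at h hya hyb ⊢
      linarith
    have hzero : HasDerivAt (fun s => s ^ (d - 1) * (inner ℝ (u s) (u' s) : ℝ)) 0 x₀ :=
      (hasDerivAt_const x₀ _).congr_of_eventuallyEq hconst
    have hQ'0 : x₀ ^ (d - 1) * (‖u' x₀‖ ^ 2 + (inner ℝ (A (u x₀)) (u x₀) : ℝ)) = 0 :=
      (hQderiv x₀ hx₀).unique hzero
    have hpos : 0 < x₀ ^ (d - 1) := pow_pos hx₀ _
    have hsum : ‖u' x₀‖ ^ 2 + (inner ℝ (A (u x₀)) (u x₀) : ℝ) = 0 := by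
      rcases mul_eq_zero.1 hQ'0 with h' | h'
      · exact absurd h' (ne_of_gt hpos)
      · exact h'
    have hu0 : u x₀ = 0 := by
      by_contra hne'
      have := hA_pos (u x₀) hne'
      nlinarith [sq_nonneg ‖u' x₀‖]
    have hu'0 : u' x₀ = 0 := by
      have h2 : ‖u' x₀‖ = 0 := by nlinarith [norm_nonneg (u' x₀), hinnerA (u x₀)]
      exact norm_eq_zero.1 h2
    obtain ⟨r₁, hr₁, hur₁⟩ := hne
    exact hur₁ (hvanish x₀ hx₀ hu0 hu'0 r₁ hr₁)
end

section
/- Let d ≥ 2 be an integer, let A be a symmetric positive definite linear map of ℝⁿ, and let u : (0,∞) → ℝⁿ be a C² solution of the linear system u''(r) = −((d−1)/r)·u'(r) + A·u(r). Assume that u is bounded on (0,1], that u'(r) → 0 as r → 0⁺, and that there exists ε > 0 such that e^{εr}·(|u(r)| + |u'(r)|) → 0 as r → +∞. Then u is identically zero. -/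
open Set Filter

/-- Let `A` be a symmetric positive definite linear map of `ℝⁿ`
and let `u` be a `C²` solution of the linear system
`u'' = −((d−1)/r)·u' + A·u` on `(0,∞)`. If `u` is bounded on `(0,1]`, if
`u'(r) → 0` as `r → 0⁺`, and if `e^{εr}·(‖u r‖ + ‖u' r‖) → 0` as `r → +∞` for
some `ε > 0`, then `u` is identically zero. -/
theorem linearized_radial_system_no_nonzero_bounded_decaying_solution
    {n : ℕ} (hn : 1 ≤ n) {d : ℕ} (hd : 2 ≤ d)
    (A : EuclideanSpace ℝ (Fin n) →ₗ[ℝ] EuclideanSpace ℝ (Fin n))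
    (hA_symm : LinearMap.IsSymmetric A)
    (hA_pos : ∀ x : EuclideanSpace ℝ (Fin n), x ≠ 0 → 0 < (inner ℝ (A x) x : ℝ))
    (u u' : ℝ → EuclideanSpace ℝ (Fin n))
    (hu : ∀ r, 0 < r → HasDerivAt u (u' r) r)
    (hu' : ∀ r, 0 < r → HasDerivAt u'
      (-(((d : ℝ) - 1) / r) • u' r + A (u r)) r)
    (hbdd : ∃ C : ℝ, ∀ r ∈ Ioc (0 : ℝ) 1, ‖u r‖ ≤ C)
    (hu'0 : Tendsto u' (nhdsWithin 0 (Ioi 0)) (nhds 0))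
    (hdecay : ∃ ε > (0 : ℝ), Tendsto
      (fun r => Real.exp (ε * r) * (‖u r‖ + ‖u' r‖)) atTop (nhds 0)) :
    ∀ r, 0 < r → u r = 0 := by
  obtain ⟨C, hC⟩ := hbdd
  obtain ⟨ε, hε, hdec⟩ := hdecay
  set p : ℝ := (d : ℝ) - 1 with hp_def
  have hd2 : (2:ℝ) ≤ (d:ℝ) := by exact_mod_cast hd
  have hp1 : 1 ≤ p := by simp only [hp_def]; linarith
  have hp0 : 0 < p := lt_of_lt_of_le one_pos hp1
  set g : ℝ → ℝ := fun r => inner ℝ (u r) (u' r) with hg_def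
  set F : ℝ → ℝ := fun r => r ^ p * g r with hF_def
  set G : ℝ → ℝ := fun r => r ^ p * (‖u' r‖ ^ 2 + inner ℝ (A (u r)) (u r)) with hG_def
  -- derivative of F
  have hFderiv : ∀ r, 0 < r → HasDerivAt F (G r) r := by
    intro r hr
    have h1 : HasDerivAt (fun x : ℝ => x ^ p) (p * r ^ (p - 1)) r :=
      Real.hasDerivAt_rpow_const (Or.inl hr.ne')
    have h2 : HasDerivAt g
        ((inner ℝ (u r) (-(p / r) • u' r + A (u r)) : ℝ) + inner ℝ (u' r) (u' r)) r :=
      (hu r hr).inner ℝ (hu' r hr)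
    have h3 := h1.mul h2
    convert h3 using 1
    · rfl
    · rfl
    · rfl
    have hinner : (inner ℝ (u r) (-(p / r) • u' r + A (u r)) : ℝ)
        = -(p / r) * g r + inner ℝ (A (u r)) (u r) := by
      rw [inner_add_right, real_inner_smul_right, real_inner_comm (u r) (A (u r))]
      try ring_nf
    rw [hinner, real_inner_self_eq_norm_sq]
    have hrp : r ^ p = r ^ (p - 1) * r := by
      rw [← Real.rpow_add_one hr.ne' (p - 1)]; ring_nf
    simp only [hG_def]
    field_simp [hrp]
    have hx : r * r ^ (p - 1) = r ^ p := by
      rw [hrp]; ring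
    linear_combination (-(p * g r)) * hx
  have hGnonneg : ∀ r, 0 < r → 0 ≤ G r := by
    intro r hr
    apply mul_nonneg (Real.rpow_nonneg hr.le p)
    have h1 : (0:ℝ) ≤ ‖u' r‖ ^ 2 := sq_nonneg _
    have h2 : (0:ℝ) ≤ inner ℝ (A (u r)) (u r) := by
      rcases eq_or_ne (u r) 0 with h | h
      · simp [h]
      · exact (hA_pos _ h).le
    linarith
  -- monotone on Ioi 0
  have hmono : MonotoneOn F (Ioi 0) := by
    apply monotoneOn_of_deriv_nonneg (convex_Ioi 0)
    · intro x hx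
      exact ((hFderiv x hx).continuousAt).continuousWithinAt
    · intro x hx
      rw [interior_Ioi] at hx
      exact (hFderiv x hx).differentiableAt.differentiableWithinAt
    · intro x hx
      rw [interior_Ioi] at hx
      rw [(hFderiv x hx).deriv]
      exact hGnonneg x hx
  -- limit at 0+
  have hC0 : (0:ℝ) ≤ C := le_trans (norm_nonneg _) (hC 1 ⟨one_pos, le_refl 1⟩)
  have hF0 : Tendsto F (nhdsWithin 0 (Ioi 0)) (nhds 0) := by
    rw [tendsto_zero_iff_abs_tendsto_zero]
    have hub : Tendsto (fun r => C * ‖u' r‖) (nhdsWithin 0 (Ioi 0)) (nhds 0) := by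
      have := (hu'0.norm).const_mul C
      simpa using this
    apply squeeze_zero' (Eventually.of_forall fun r => abs_nonneg _) _ hub
    filter_upwards [Ioc_mem_nhdsGT_of_mem ⟨le_refl (0:ℝ), one_pos⟩] with r hr
    have hr0 : 0 < r := hr.1
    have hrp1 : r ^ p ≤ 1 := Real.rpow_le_one hr0.le hr.2 hp0.le
    have h1 : |F r| ≤ r ^ p * (‖u r‖ * ‖u' r‖) := by
      rw [hF_def, abs_mul, abs_of_nonneg (Real.rpow_nonneg hr0.le p)]
      exact mul_le_mul_of_nonneg_left (abs_real_inner_le_norm _ _)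
        (Real.rpow_nonneg hr0.le p)
    have h2 : r ^ p * (‖u r‖ * ‖u' r‖) ≤ 1 * (‖u r‖ * ‖u' r‖) :=
      mul_le_mul_of_nonneg_right hrp1 (mul_nonneg (norm_nonneg _) (norm_nonneg _))
    have h3 : ‖u r‖ * ‖u' r‖ ≤ C * ‖u' r‖ :=
      mul_le_mul_of_nonneg_right (hC r hr) (norm_nonneg _)
    linarith
  -- limit at infinity
  have hFtop : Tendsto F atTop (nhds 0) := by
    rw [tendsto_zero_iff_abs_tendsto_zero]
    have hub : Tendsto (fun r : ℝ => r ^ p * Real.exp (-(2*ε) * r)) atTop (nhds 0) :=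
      tendsto_rpow_mul_exp_neg_mul_atTop_nhds_zero p (2*ε) (by linarith)
    apply squeeze_zero' (Eventually.of_forall fun r => abs_nonneg _) _ hub
    have hev : ∀ᶠ r in atTop, Real.exp (ε * r) * (‖u r‖ + ‖u' r‖) < 1 :=
      hdec.eventually (gt_mem_nhds one_pos)
    filter_upwards [hev, eventually_ge_atTop (1:ℝ)] with r hr1 hr2
    have hr0 : (0:ℝ) < r := lt_of_lt_of_le one_pos hr2
    have hexp : (0:ℝ) < Real.exp (ε * r) := Real.exp_pos _
    have hsum : ‖u r‖ + ‖u' r‖ ≤ Real.exp (-(ε * r)) := by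
      rw [Real.exp_neg, ← one_div, le_div_iff₀ hexp]
      nlinarith
    have h1 : |F r| ≤ r ^ p * (‖u r‖ * ‖u' r‖) := by
      rw [hF_def, abs_mul, abs_of_nonneg (Real.rpow_nonneg hr0.le p)]
      exact mul_le_mul_of_nonneg_left (abs_real_inner_le_norm _ _)
        (Real.rpow_nonneg hr0.le p)
    have h2 : ‖u r‖ * ‖u' r‖ ≤ (‖u r‖ + ‖u' r‖)^2 := by
      nlinarith [norm_nonneg (u r), norm_nonneg (u' r)]
    have h3 : (‖u r‖ + ‖u' r‖)^2 ≤ (Real.exp (-(ε * r)))^2 := by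
      apply sq_le_sq'
      · have := add_nonneg (norm_nonneg (u r)) (norm_nonneg (u' r))
        linarith [Real.exp_pos (-(ε * r))]
      · exact hsum
    have h4 : (Real.exp (-(ε * r)))^2 = Real.exp (-(2*ε) * r) := by
      rw [← Real.exp_nat_mul]; ring_nf
    calc |F r| ≤ r ^ p * (‖u r‖ * ‖u' r‖) := h1
      _ ≤ r ^ p * Real.exp (-(2*ε) * r) := by
          apply mul_le_mul_of_nonneg_left _ (Real.rpow_nonneg hr0.le p)
          rw [← h4]; linarith
  -- F vanishes on Ioi 0
  have hFzero : ∀ r, 0 < r → F r = 0 := by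
    intro r hr
    have hle : F r ≤ 0 := by
      apply ge_of_tendsto hFtop
      filter_upwards [eventually_ge_atTop r] with s hs
      exact hmono (mem_Ioi.mpr hr) (mem_Ioi.mpr (lt_of_lt_of_le hr hs)) hs
    have hge : 0 ≤ F r := by
      apply le_of_tendsto hF0
      filter_upwards [Ioc_mem_nhdsGT_of_mem ⟨le_refl (0:ℝ), hr⟩] with s hs
      exact hmono (mem_Ioi.mpr hs.1) (mem_Ioi.mpr hr) hs.2
    linarith
  -- conclude
  intro r hr
  have hGzero : G r = 0 := by
    have hcongr : F =ᶠ[nhds r] (fun _ => 0) := by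
      filter_upwards [Ioi_mem_nhds hr] with s hs
      exact hFzero s hs
    have h1 : HasDerivAt (fun _ : ℝ => (0:ℝ)) (G r) r :=
      (hFderiv r hr).congr_of_eventuallyEq hcongr.symm
    have h2 : HasDerivAt (fun _ : ℝ => (0:ℝ)) 0 r := hasDerivAt_const r 0
    exact h1.unique h2
  have hrp : (0:ℝ) < r ^ p := Real.rpow_pos_of_pos hr p
  have hsum : ‖u' r‖ ^ 2 + (inner ℝ (A (u r)) (u r) : ℝ) = 0 := by
    by_contra h
    have := mul_ne_zero hrp.ne' h
    exact this hGzero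
  by_contra h
  have h1 := hA_pos (u r) h
  have h2 : (0:ℝ) ≤ ‖u' r‖ ^ 2 := sq_nonneg _
  linarith
end

section
/- Let d ≥ 2 be an integer, let V : ℝⁿ → ℝ be of class C¹, and let u : (0,∞) → ℝⁿ be a radial profile for V such that u(r) → u₀ ∈ ℝⁿ and u'(r) → 0 as r → 0⁺. Then u'(r)/r → ∇V(u₀)/d as r → 0⁺. -/
open Set Filter

/-- For a radial profile `u` for a `C¹` potential `V` such that
`u(r) → u₀` and `u'(r) → 0` as `r → 0⁺`, one has `u'(r)/r → ∇V(u₀)/d` as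
`r → 0⁺`. -/
theorem radial_profile_tangent_direction_at_origin
    {n : ℕ} (hn : 1 ≤ n) {d : ℕ} (hd : 2 ≤ d)
    (V : EuclideanSpace ℝ (Fin n) → ℝ) (hV : ContDiff ℝ 1 V)
    (u u' : ℝ → EuclideanSpace ℝ (Fin n))
    (hu : ∀ r, 0 < r → HasDerivAt u (u' r) r)
    (hu' : ∀ r, 0 < r → HasDerivAt u'
      (-(((d : ℝ) - 1) / r) • u' r + gradient V (u r)) r)
    (u₀ : EuclideanSpace ℝ (Fin n))
    (hu0 : Tendsto u (nhdsWithin 0 (Ioi 0)) (nhds u₀))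
    (hu'0 : Tendsto u' (nhdsWithin 0 (Ioi 0)) (nhds 0)) :
    Tendsto (fun r : ℝ => r⁻¹ • u' r) (nhdsWithin 0 (Ioi 0))
      (nhds (((d : ℝ)⁻¹) • gradient V u₀)) := by
  set L := gradient V u₀ with hL
  set g : ℝ → EuclideanSpace ℝ (Fin n) := fun r => gradient V (u r) with hg
  have hdR : (0:ℝ) < d := by positivity
  have hdne : (d:ℝ) ≠ 0 := ne_of_gt hdR
  -- continuity of the gradient
  have hgradc : Continuous (gradient V) := by
    have : gradient V = fun x => (InnerProductSpace.toDual ℝ _).symm (fderiv ℝ V x) := rfl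
    rw [this]
    exact (InnerProductSpace.toDual ℝ _).symm.continuous.comp (hV.continuous_fderiv one_ne_zero)
  have hgL : Tendsto g (nhdsWithin 0 (Ioi 0)) (nhds L) :=
    (hgradc.continuousAt.tendsto).comp hu0
  -- auxiliary function G
  set G : ℝ → EuclideanSpace ℝ (Fin n) :=
    fun r => r ^ (d - 1) • u' r - ((d:ℝ)⁻¹ * r ^ d) • L with hG
  have hGd : ∀ r, 0 < r → HasDerivAt G (r ^ (d - 1) • (g r - L)) r := by
    intro r hr
    have h2 : HasDerivAt (fun r : ℝ => ((d:ℝ)⁻¹ * r ^ d) • L)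
        (((d:ℝ)⁻¹ * ((d : ℕ) * r ^ (d - 1))) • L) r := by
      have := ((hasDerivAt_pow d r).const_mul ((d:ℝ)⁻¹)).smul_const L
      simpa using this
    have h3 := ((hasDerivAt_pow (d - 1) r).smul (hu' r hr)).sub h2
    have hd1 : ((d - 1 : ℕ) : ℝ) = (d:ℝ) - 1 := by
      push_cast [Nat.cast_sub (by omega : 1 ≤ d)]; ring
    have hdd : (d:ℝ)⁻¹ * ((d : ℕ) * r ^ (d - 1)) = r ^ (d - 1) := by field_simp
    have hco : r ^ (d-1) * -(((d:ℝ) - 1) / r) = -(((d - 1 : ℕ):ℝ) * r ^ (d - 1 - 1)) := by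
      have hrp : r ^ (d - 1) = r * r ^ (d - 1 - 1) := by
        rw [← pow_succ']; congr 1; omega
      rw [hd1, hrp]; field_simp
    simp only [hg]
    refine h3.congr_deriv ?_
    rw [hdd, smul_sub, smul_add, smul_smul, hco]
    module
  -- G tends to 0
  have hG0 : Tendsto G (nhdsWithin 0 (Ioi 0)) (nhds 0) := by
    have t1 : Tendsto (fun r : ℝ => r ^ (d - 1) • u' r) (nhdsWithin 0 (Ioi 0)) (nhds 0) := by
      have hp : Tendsto (fun r : ℝ => r ^ (d - 1)) (nhdsWithin 0 (Ioi 0)) (nhds 0) := by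
        have : Tendsto (fun r : ℝ => r ^ (d - 1)) (nhds 0) (nhds ((0:ℝ) ^ (d - 1))) :=
          (continuous_pow (d-1)).tendsto 0
        rw [zero_pow (by omega : d - 1 ≠ 0)] at this
        exact this.mono_left nhdsWithin_le_nhds
      simpa using hp.smul hu'0
    have t2 : Tendsto (fun r : ℝ => ((d:ℝ)⁻¹ * r ^ d) • L) (nhdsWithin 0 (Ioi 0)) (nhds 0) := by
      have hp : Tendsto (fun r : ℝ => (d:ℝ)⁻¹ * r ^ d) (nhdsWithin 0 (Ioi 0)) (nhds 0) := by
        have : Tendsto (fun r : ℝ => (d:ℝ)⁻¹ * r ^ d) (nhds 0)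
            (nhds ((d:ℝ)⁻¹ * (0:ℝ) ^ d)) :=
          (continuous_const.mul (continuous_pow d)).tendsto 0
        rw [zero_pow (by omega : d ≠ 0), mul_zero] at this
        exact this.mono_left nhdsWithin_le_nhds
      simpa using hp.smul_const L
    simpa using t1.sub t2
  -- main estimate
  rw [Metric.tendsto_nhdsWithin_nhds]
  intro ε hε
  obtain ⟨δ, hδ, hδ'⟩ := Metric.tendsto_nhdsWithin_nhds.mp hgL (ε/2) (by positivity)
  refine ⟨δ, hδ, ?_⟩
  intro r hr hrδ
  have hr0 : (0:ℝ) < r := hr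
  -- bound on ‖G r‖
  have key : ‖G r‖ ≤ (ε/2) * r ^ d := by
    -- for all a in (0, r], ‖G r - G a‖ ≤ (ε/2) * r^(d-1) * (r - a)
    have hbound : ∀ a, 0 < a → a ≤ r → ‖G r - G a‖ ≤ (ε/2) * r ^ (d-1) * (r - a) := by
      intro a ha har
      have hmv := norm_image_sub_le_of_norm_deriv_le_segment'
        (f := G) (f' := fun x => x ^ (d - 1) • (g x - L)) (a := a) (b := r)
        (C := (ε/2) * r ^ (d-1))
        (fun x hx => ((hGd x (lt_of_lt_of_le ha hx.1)).hasDerivWithinAt))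
        ?_ r ⟨har, le_refl r⟩
      · exact hmv
      · intro x hx
        have hx0 : 0 < x := lt_of_lt_of_le ha hx.1
        rw [norm_smul, Real.norm_eq_abs, abs_of_nonneg (by positivity)]
        have hrδ' : r < δ := by rwa [Real.dist_eq, sub_zero, abs_of_pos hr0] at hrδ
        have h1 : ‖g x - L‖ ≤ ε/2 := by
          have := hδ' (show x ∈ Ioi (0:ℝ) from hx0)
            (by rw [Real.dist_eq, sub_zero, abs_of_pos hx0]; exact lt_trans hx.2 hrδ')
          rw [dist_eq_norm] at this
          exact this.le
        have h2 : x ^ (d-1) ≤ r ^ (d-1) :=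
          pow_le_pow_left₀ hx0.le hx.2.le _
        calc x ^ (d-1) * ‖g x - L‖ ≤ r ^ (d-1) * (ε/2) :=
              mul_le_mul h2 h1 (norm_nonneg _) (by positivity)
          _ = (ε/2) * r ^ (d-1) := by ring
    -- take a → 0⁺
    have hlim : Tendsto (fun a => ‖G r - G a‖) (nhdsWithin 0 (Ioi 0)) (nhds ‖G r‖) := by
      have : Tendsto (fun a => G r - G a) (nhdsWithin 0 (Ioi 0)) (nhds (G r - 0)) :=
        tendsto_const_nhds.sub hG0
      rw [sub_zero] at this
      exact this.norm
    have hev : ∀ᶠ a in nhdsWithin 0 (Ioi 0), ‖G r - G a‖ ≤ (ε/2) * r ^ d := by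
      filter_upwards [Ioo_mem_nhdsGT_of_mem ⟨le_refl (0:ℝ), hr0⟩] with a ha
      calc ‖G r - G a‖ ≤ (ε/2) * r ^ (d-1) * (r - a) := hbound a ha.1 ha.2.le
        _ ≤ (ε/2) * r ^ (d-1) * r := by
            apply mul_le_mul_of_nonneg_left (by linarith [ha.1]) (by positivity)
        _ = (ε/2) * r ^ d := by
            rw [mul_assoc, ← pow_succ]
            congr 2
            omega
    exact le_of_tendsto hlim hev
  -- conclude
  have hid : r⁻¹ • u' r - (d:ℝ)⁻¹ • L = (r ^ d)⁻¹ • G r := by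
    rw [hG, smul_sub, smul_smul, smul_smul]
    congr 2
    · have h : r ^ d = r * r ^ (d - 1) := by rw [← pow_succ']; congr 1; omega
      rw [h, mul_inv, mul_assoc, inv_mul_cancel₀ (pow_ne_zero _ (ne_of_gt hr0)), mul_one]
    · field_simp
  rw [dist_eq_norm, hid, norm_smul, Real.norm_eq_abs, abs_of_pos (by positivity)]
  calc (r ^ d)⁻¹ * ‖G r‖ ≤ (r ^ d)⁻¹ * ((ε/2) * r ^ d) :=
        mul_le_mul_of_nonneg_left key (by positivity)
    _ = ε/2 := by field_simp
    _ < ε := by linarith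
end

section
/- Let d ≥ 2 be an integer, let V : ℝⁿ → ℝ be of class C², and let u : (0,∞) → ℝⁿ be a radial profile for V such that u(r) → u₀ ∈ ℝⁿ and u'(r) → 0 as r → 0⁺. If ∇V(u₀) = 0, then u(r) = u₀ for every r > 0. -/
open Set Filter

open scoped RealInnerProductSpace

set_option maxHeartbeats 1000000

/-- Key monotonicity lemma: the exponentially-weighted energy
`(‖u r - u₀‖² + ‖u' r‖²) · exp(-(L+1) r)` is nonincreasing on any convex
subset of `(0,∞)` on which `u` stays in a ball where `∇V` is `L`-Lipschitz. -/
lemma radial_energy_antitoneOn {n : ℕ} {d : ℕ} (hd : 2 ≤ d)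
    (V : EuclideanSpace ℝ (Fin n) → ℝ)
    (u u' : ℝ → EuclideanSpace ℝ (Fin n))
    (hu : ∀ r, 0 < r → HasDerivAt u (u' r) r)
    (hu' : ∀ r, 0 < r → HasDerivAt u'
      (-(((d : ℝ) - 1) / r) • u' r + gradient V (u r)) r)
    (u₀ : EuclideanSpace ℝ (Fin n)) (hcrit : gradient V u₀ = 0)
    {L : NNReal} {δ : ℝ} (hδ : 0 ≤ δ)
    (hLip : LipschitzOnWith L (gradient V) (Metric.closedBall u₀ δ))
    {s : Set ℝ} (hconv : Convex ℝ s) (hs : s ⊆ Ioi 0)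
    (hmap : ∀ r ∈ s, u r ∈ Metric.closedBall u₀ δ) :
    AntitoneOn (fun r => (‖u r - u₀‖ ^ 2 + ‖u' r‖ ^ 2) *
      Real.exp (-((L : ℝ) + 1) * r)) s := by
  set C : ℝ := (L : ℝ) + 1 with hCdef
  have hC0 : 0 < C := by positivity
  -- rewrite the function using inner products
  have hfun : (fun r => (‖u r - u₀‖ ^ 2 + ‖u' r‖ ^ 2) * Real.exp (-C * r))
      = fun r => (⟪u r - u₀, u r - u₀⟫ + ⟪u' r, u' r⟫) * Real.exp (-C * r) := by
    funext t
    rw [real_inner_self_eq_norm_sq, real_inner_self_eq_norm_sq]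
  -- derivative of the full function at any r > 0
  have H : ∀ r, 0 < r → HasDerivAt
      (fun t => (⟪u t - u₀, u t - u₀⟫ + ⟪u' t, u' t⟫) * Real.exp (-C * t))
      (((⟪u r - u₀, u' r⟫ + ⟪u' r, u r - u₀⟫) +
        (⟪u' r, -(((d : ℝ) - 1) / r) • u' r + gradient V (u r)⟫ +
         ⟪-(((d : ℝ) - 1) / r) • u' r + gradient V (u r), u' r⟫)) * Real.exp (-C * r)
       + (⟪u r - u₀, u r - u₀⟫ + ⟪u' r, u' r⟫) * (Real.exp (-C * r) * -C)) r := by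
    intro r hr
    have h1 : HasDerivAt (fun t => u t - u₀) (u' r) r := (hu r hr).sub_const _
    have h2 := HasDerivAt.inner ℝ h1 h1
    have h3 := HasDerivAt.inner ℝ (hu' r hr) (hu' r hr)
    have hg := h2.add h3
    have he : HasDerivAt (fun t => Real.exp (-C * t)) (Real.exp (-C * r) * -C) r := by
      have := ((hasDerivAt_id r).const_mul (-C)).exp
      simpa [mul_comm] using this
    exact hg.mul he
  rw [hfun]
  apply antitoneOn_of_deriv_nonpos hconv
  · intro r hr
    exact ((H r (hs hr)).continuousAt).continuousWithinAt
  · intro r hr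
    exact ((H r (hs (interior_subset hr))).differentiableAt).differentiableWithinAt
  · intro r hr
    have hrs : r ∈ s := interior_subset hr
    have hr0 : (0 : ℝ) < r := hs hrs
    rw [(H r hr0).deriv]
    -- now prove the derivative is ≤ 0
    set a : ℝ := ‖u r - u₀‖ with ha
    set b : ℝ := ‖u' r‖ with hb
    set p : EuclideanSpace ℝ (Fin n) := gradient V (u r) with hp
    have hinner1 : ⟪u r - u₀, u' r⟫ ≤ a * b := real_inner_le_norm _ _
    have hinner2 : ⟪u' r, u r - u₀⟫ ≤ b * a := real_inner_le_norm _ _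
    have hpnorm : ‖p‖ ≤ (L : ℝ) * a := by
      have h1 := hLip.dist_le_mul (u r) (hmap r hrs) u₀ (by simp [hδ])
      rw [dist_eq_norm, dist_eq_norm] at h1
      simpa [hp, hcrit] using h1
    have hinner3 : ⟪u' r, p⟫ ≤ b * ((L : ℝ) * a) := by
      refine le_trans (real_inner_le_norm _ _) ?_
      exact mul_le_mul_of_nonneg_left hpnorm (norm_nonneg _)
    have hinner4 : ⟪p, u' r⟫ ≤ ((L : ℝ) * a) * b := by
      refine le_trans (real_inner_le_norm _ _) ?_
      exact mul_le_mul_of_nonneg_right hpnorm (norm_nonneg _)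
    have hdamp : 0 ≤ (((d : ℝ) - 1) / r) * ⟪u' r, u' r⟫ := by
      apply mul_nonneg
      · apply div_nonneg _ hr0.le
        have : (2 : ℝ) ≤ (d : ℝ) := by exact_mod_cast hd
        linarith
      · exact real_inner_self_nonneg
    have hexp : (0 : ℝ) < Real.exp (-C * r) := Real.exp_pos _
    have hw1 : ⟪u' r, -(((d : ℝ) - 1) / r) • u' r + p⟫
        = -((((d : ℝ) - 1) / r)) * ⟪u' r, u' r⟫ + ⟪u' r, p⟫ := by
      rw [inner_add_right, real_inner_smul_right]
    have hw2 : ⟪-(((d : ℝ) - 1) / r) • u' r + p, u' r⟫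
        = -((((d : ℝ) - 1) / r)) * ⟪u' r, u' r⟫ + ⟪p, u' r⟫ := by
      rw [inner_add_left, real_inner_smul_left]
    have hE : (⟪u r - u₀, u' r⟫ + ⟪u' r, u r - u₀⟫) +
        (⟪u' r, -(((d : ℝ) - 1) / r) • u' r + p⟫ +
         ⟪-(((d : ℝ) - 1) / r) • u' r + p, u' r⟫) ≤ C * (a ^ 2 + b ^ 2) := by
      rw [hw1, hw2]
      have h2ab : 2 * a * b ≤ a ^ 2 + b ^ 2 := two_mul_le_add_sq a b
      have hL0 : (0 : ℝ) ≤ L := L.coe_nonneg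
      have h2Lab : (L:ℝ) * (2 * a * b) ≤ (L:ℝ) * (a ^ 2 + b ^ 2) :=
        mul_le_mul_of_nonneg_left h2ab hL0
      linarith [hCdef]
    have hG : ⟪u r - u₀, u r - u₀⟫ + ⟪u' r, u' r⟫ = a ^ 2 + b ^ 2 := by
      rw [real_inner_self_eq_norm_sq, real_inner_self_eq_norm_sq]
    rw [hG]
    have hmul := mul_le_mul_of_nonneg_right hE hexp.le
    have : C * (a ^ 2 + b ^ 2) * Real.exp (-C * r)
        + (a ^ 2 + b ^ 2) * (Real.exp (-C * r) * -C) = 0 := by ring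
    linarith

/-- If the weighted energy vanishes, both components vanish. -/
lemma energy_zero_aux {E : Type*} [NormedAddCommGroup E] {x y : E}
    (h : ‖x‖ ^ 2 + ‖y‖ ^ 2 ≤ 0) : x = 0 ∧ y = 0 := by
  constructor
  · have : ‖x‖ ^ 2 ≤ 0 := by nlinarith [sq_nonneg ‖y‖]
    have : ‖x‖ = 0 := by nlinarith [norm_nonneg x]
    simpa using this
  · have : ‖y‖ ^ 2 ≤ 0 := by nlinarith [sq_nonneg ‖x‖]
    have : ‖y‖ = 0 := by nlinarith [norm_nonneg y]
    simpa using this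

/-- For a radial profile `u` for a `C²` potential `V` such that
`u(r) → u₀` and `u'(r) → 0` as `r → 0⁺`, if `∇V(u₀) = 0` then `u` is
identically equal to `u₀` on `(0,∞)`. -/
theorem radial_profile_constant_iff_critical_at_origin
    {n : ℕ} (hn : 1 ≤ n) {d : ℕ} (hd : 2 ≤ d)
    (V : EuclideanSpace ℝ (Fin n) → ℝ) (hV : ContDiff ℝ 2 V)
    (u u' : ℝ → EuclideanSpace ℝ (Fin n))
    (hu : ∀ r, 0 < r → HasDerivAt u (u' r) r)
    (hu' : ∀ r, 0 < r → HasDerivAt u'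
      (-(((d : ℝ) - 1) / r) • u' r + gradient V (u r)) r)
    (u₀ : EuclideanSpace ℝ (Fin n))
    (hu0 : Tendsto u (nhdsWithin 0 (Ioi 0)) (nhds u₀))
    (hu'0 : Tendsto u' (nhdsWithin 0 (Ioi 0)) (nhds 0))
    (hcrit : gradient V u₀ = 0) :
    ∀ r, 0 < r → u r = u₀ := by
  -- Step 0: local Lipschitz bound on the gradient
  have hgradC : ContDiff ℝ 1 (gradient V) := by
    have h1 : ContDiff ℝ 1 (fderiv ℝ V) := hV.fderiv_right (by norm_num)
    have h2 : gradient V = fun x => (InnerProductSpace.toDual ℝ _).symm (fderiv ℝ V x) := rfl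
    rw [h2]
    exact (InnerProductSpace.toDual ℝ _).symm.contDiff.comp h1
  obtain ⟨L, t, ht, hLt⟩ := hgradC.contDiffAt.exists_lipschitzOnWith (x := u₀)
  obtain ⟨δ, hδpos, hball⟩ := Metric.nhds_basis_closedBall.mem_iff.mp ht
  have hLip : LipschitzOnWith L (gradient V) (Metric.closedBall u₀ δ) := hLt.mono hball
  set C : ℝ := (L : ℝ) + 1 with hCdef
  set g : ℝ → ℝ := fun r => ‖u r - u₀‖ ^ 2 + ‖u' r‖ ^ 2 with hgdef
  set h : ℝ → ℝ := fun r => g r * Real.exp (-C * r) with hhdef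
  have hg0 : ∀ r, 0 ≤ g r := fun r => by positivity
  have hh0 : ∀ r, 0 ≤ h r := fun r => mul_nonneg (hg0 r) (Real.exp_pos _).le
  -- the energy tends to 0 at the origin
  have hh_tend : Tendsto h (nhdsWithin 0 (Ioi 0)) (nhds 0) := by
    have t1 : Tendsto (fun r => ‖u r - u₀‖ ^ 2) (nhdsWithin 0 (Ioi 0)) (nhds 0) := by
      have hsub : Tendsto (fun r => u r - u₀) (nhdsWithin 0 (Ioi 0)) (nhds 0) := by
        simpa using hu0.sub_const u₀
      simpa using (hsub.norm.pow 2)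
    have t2 : Tendsto (fun r => ‖u' r‖ ^ 2) (nhdsWithin 0 (Ioi 0)) (nhds 0) := by
      simpa using (hu'0.norm.pow 2)
    have tg : Tendsto g (nhdsWithin 0 (Ioi 0)) (nhds 0) := by
      simpa using t1.add t2
    have te : Tendsto (fun r => Real.exp (-C * r)) (nhdsWithin 0 (Ioi 0)) (nhds 1) := by
      have hc : Continuous fun r : ℝ => Real.exp (-C * r) := by continuity
      simpa using (hc.tendsto 0).mono_left nhdsWithin_le_nhds
    rw [hhdef]
    simpa using tg.mul te
  -- Step 1: u stays in the ball near 0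
  have hmem : {r : ℝ | u r ∈ Metric.closedBall u₀ δ} ∈ nhdsWithin (0:ℝ) (Ioi 0) :=
    hu0 (Metric.closedBall_mem_nhds u₀ hδpos)
  obtain ⟨r₁, hr₁pos, hr₁⟩ := mem_nhdsGT_iff_exists_Ioc_subset.mp hmem
  -- Step 2: energy vanishes on (0, r₁]
  have hAnti1 : AntitoneOn h (Ioc 0 r₁) := by
    rw [hhdef, hgdef]
    exact radial_energy_antitoneOn hd V u u' hu hu' u₀ hcrit hδpos.le hLip
      (convex_Ioc 0 r₁) Ioc_subset_Ioi_self (fun r hr => hr₁ hr)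
  have hzero1 : ∀ r ∈ Ioc (0:ℝ) r₁, g r = 0 := by
    intro r hr
    have hev : ∀ᶠ a in nhdsWithin (0:ℝ) (Ioi 0), h r ≤ h a := by
      filter_upwards [Ioc_mem_nhdsGT_of_mem (⟨le_refl 0, hr.1⟩ : (0:ℝ) ∈ Ico 0 r)]
        with a ha
      exact hAnti1 ⟨ha.1, le_trans ha.2 hr.2⟩ hr ha.2
    have : h r ≤ 0 := ge_of_tendsto hh_tend hev
    have hh' : h r = 0 := le_antisymm this (hh0 r)
    have := (Real.exp_pos (-C * r)).ne'
    exact (mul_eq_zero.mp hh').resolve_right this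
  have huzero1 : ∀ r ∈ Ioc (0:ℝ) r₁, u r = u₀ := by
    intro r hr
    have := (energy_zero_aux (le_of_eq (hzero1 r hr))).1
    exact sub_eq_zero.mp this
  -- Step 3: continuation argument
  by_contra hcon
  push_neg at hcon
  obtain ⟨r₂, hr₂pos, hr₂ne⟩ := hcon
  set S : Set ℝ := {r | 0 < r ∧ u r ≠ u₀} with hSdef
  have hSne : S.Nonempty := ⟨r₂, hr₂pos, hr₂ne⟩
  have hSbdd : BddBelow S := ⟨0, fun x hx => hx.1.le⟩
  set T : ℝ := sInf S with hTdef
  have hTr₁ : r₁ ≤ T := by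
    apply le_csInf hSne
    intro s hs
    by_contra hlt
    push_neg at hlt
    exact hs.2 (huzero1 s ⟨hs.1, hlt.le⟩)
  have hT0 : 0 < T := lt_of_lt_of_le hr₁pos hTr₁
  have hbelow : ∀ r ∈ Ioo (0:ℝ) T, u r = u₀ := by
    intro r hr
    by_contra hne
    exact absurd (csInf_le hSbdd (⟨hr.1, hne⟩ : r ∈ S)) (not_le.mpr hr.2)
  have hbelow' : ∀ r ∈ Ioo (0:ℝ) T, u' r = 0 := by
    intro r hr
    have hev : u =ᶠ[nhds r] fun _ => u₀ := by
      filter_upwards [isOpen_Ioo.mem_nhds hr] with a ha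
      exact hbelow a ha
    have hconst : HasDerivAt u 0 r := (hasDerivAt_const r u₀).congr_of_eventuallyEq hev
    exact (hu r hr.1).unique hconst
  -- u T = u₀ and u' T = 0 by continuity from the left
  have huT : u T = u₀ := by
    have hc : Tendsto u (nhdsWithin T (Iio T)) (nhds (u T)) :=
      (hu T hT0).continuousAt.continuousWithinAt
    have hc' : Tendsto u (nhdsWithin T (Iio T)) (nhds u₀) := by
      apply Tendsto.congr' _ tendsto_const_nhds
      filter_upwards [Ioo_mem_nhdsLT_of_mem (⟨hT0, le_refl T⟩ : T ∈ Ioc 0 T)] with a ha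
      exact (hbelow a ha).symm
    exact tendsto_nhds_unique hc hc'
  have hu'T : u' T = 0 := by
    have hc : Tendsto u' (nhdsWithin T (Iio T)) (nhds (u' T)) :=
      (hu' T hT0).continuousAt.continuousWithinAt
    have hc' : Tendsto u' (nhdsWithin T (Iio T)) (nhds 0) := by
      apply Tendsto.congr' _ tendsto_const_nhds
      filter_upwards [Ioo_mem_nhdsLT_of_mem (⟨hT0, le_refl T⟩ : T ∈ Ioc 0 T)] with a ha
      exact (hbelow' a ha).symm
    exact tendsto_nhds_unique hc hc'
  have hgT : g T = 0 := by simp [hgdef, huT, hu'T]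
  -- u stays in the ball slightly beyond T
  obtain ⟨ε, hεpos, hε⟩ := Metric.continuousAt_iff.mp (hu T hT0).continuousAt δ hδpos
  have hmap2 : ∀ r ∈ Icc T (T + ε / 2), u r ∈ Metric.closedBall u₀ δ := by
    intro r hr
    have hdist : dist r T < ε := by
      rw [Real.dist_eq, abs_of_nonneg (by linarith [hr.1])]
      linarith [hr.2]
    have := hε hdist
    rw [huT] at this
    exact Metric.ball_subset_closedBall this
  have hAnti2 : AntitoneOn h (Icc T (T + ε / 2)) := by
    rw [hhdef, hgdef]
    exact radial_energy_antitoneOn hd V u u' hu hu' u₀ hcrit hδpos.le hLip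
      (convex_Icc _ _) (fun r hr => lt_of_lt_of_le hT0 hr.1) hmap2
  have hzero2 : ∀ r ∈ Icc T (T + ε / 2), u r = u₀ := by
    intro r hr
    have hTmem : T ∈ Icc T (T + ε / 2) := ⟨le_refl T, by linarith⟩
    have h1 : h r ≤ h T := hAnti2 hTmem hr hr.1
    have hhT : h T = 0 := by simp [hhdef, hgT]
    have hh' : h r = 0 := le_antisymm (hhT ▸ h1) (hh0 r)
    have hgr : g r = 0 := (mul_eq_zero.mp hh').resolve_right (Real.exp_pos (-C * r)).ne'
    exact sub_eq_zero.mp (energy_zero_aux (le_of_eq hgr)).1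
  -- contradiction with the definition of T
  obtain ⟨s, hsS, hslt⟩ := exists_lt_of_csInf_lt hSne
    (show sInf S < T + ε / 2 by rw [← hTdef]; linarith)
  have hsge : T ≤ s := csInf_le hSbdd hsS
  exact hsS.2 (hzero2 s ⟨hsge, hslt.le⟩)
end

section
/- Let d ≥ 2 be an integer, let V : ℝⁿ → ℝ be of class C¹, and let u : (0,∞) → ℝⁿ be a radial profile for V such that u(r) → u₀ ∈ ℝⁿ and u'(r) → 0 as r → 0⁺; extend u continuously to [0,∞) by setting u(0) = u₀. If ∇V(u₀) ≠ 0, then there exists r_once > 0 such that: (1) u'(r) ≠ 0 for every r in (0, r_once); and (2) for every r* in [0, r_once) and every r in [0,∞), u(r) = u(r*) implies r = r*. -/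
open Set Filter

open scoped RealInnerProductSpace

private lemma aux_mono_once {f f' : ℝ → ℝ} {a b : ℝ}
    (hf : ∀ x ∈ Icc a b, HasDerivAt f (f' x) x)
    (h0 : ∀ x ∈ Icc a b, 0 ≤ f' x) (hab : a ≤ b) : f a ≤ f b := by
  have hc : ContinuousOn f (Icc a b) := fun x hx =>
    (hf x hx).continuousAt.continuousWithinAt
  have hm := monotoneOn_of_deriv_nonneg (convex_Icc a b) hc
    (fun x hx => by
      have hx' : x ∈ Icc a b := interior_subset hx
      exact (hf x hx').differentiableAt.differentiableWithinAt)
    (fun x hx => by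
      have hx' : x ∈ Icc a b := interior_subset hx
      rw [(hf x hx').deriv]; exact h0 x hx')
  exact hm (left_mem_Icc.2 hab) (right_mem_Icc.2 hab) hab

set_option maxHeartbeats 1000000 in
/-- Let `u` be a radial profile for a `C¹` potential `V` with
`u(r) → u₀` and `u'(r) → 0` as `r → 0⁺`, and extend `u` to `[0,∞)` by the
value `u₀` at `0` (the function `v` below). If `∇V(u₀) ≠ 0`, then there is
`r_once > 0` such that `u'` does not vanish on `(0, r_once)` and every value
taken by the extended profile on `[0, r_once)` is reached only once on
`[0,∞)`. -/
theorem radial_profile_values_reached_once_near_origin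
    {n : ℕ} (hn : 1 ≤ n) {d : ℕ} (hd : 2 ≤ d)
    (V : EuclideanSpace ℝ (Fin n) → ℝ) (hV : ContDiff ℝ 1 V)
    (u u' : ℝ → EuclideanSpace ℝ (Fin n))
    (hu : ∀ r, 0 < r → HasDerivAt u (u' r) r)
    (hu' : ∀ r, 0 < r → HasDerivAt u'
      (-(((d : ℝ) - 1) / r) • u' r + gradient V (u r)) r)
    (u₀ : EuclideanSpace ℝ (Fin n))
    (hu0 : Tendsto u (nhdsWithin 0 (Ioi 0)) (nhds u₀))
    (hu'0 : Tendsto u' (nhdsWithin 0 (Ioi 0)) (nhds 0))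
    (hnoncrit : gradient V u₀ ≠ 0) :
    ∃ ronce > (0 : ℝ),
      (∀ r, 0 < r → r < ronce → u' r ≠ 0) ∧
      (∀ rstar ∈ Ico (0 : ℝ) ronce, ∀ r ∈ Ici (0 : ℝ),
        (if r = 0 then u₀ else u r) = (if rstar = 0 then u₀ else u rstar) →
        r = rstar) := by
  obtain ⟨m, rfl⟩ : ∃ m, d = m + 2 := ⟨d - 2, by omega⟩
  clear hd hn
  
  set g := gradient V u₀ with hgdef
  set A := ‖g‖ with hAdef
  have hApos : 0 < A := norm_pos_iff.mpr hnoncrit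
  clear_value A
  set D : ℝ := ((m + 2 : ℕ) : ℝ) with hDdef
  have hD2 : (2:ℝ) ≤ D := by
    rw [hDdef]; push_cast; linarith [show (0:ℝ) ≤ (m:ℝ) from Nat.cast_nonneg m]
  have hDpos : (0:ℝ) < D := by linarith
  clear_value D
  set l : Filter ℝ := nhdsWithin 0 (Ioi 0) with hldef
  set G : ℝ → EuclideanSpace ℝ (Fin n) := fun s => gradient V (u s) with hGdef
  have hVd : Differentiable ℝ V := hV.differentiable one_ne_zero
  have hVc : Continuous V := hVd.continuous
  have hgc : Continuous (fun x => gradient V x) := by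
    have h1 : Continuous (fderiv ℝ V) := hV.continuous_fderiv one_ne_zero
    exact (InnerProductSpace.toDual ℝ _).symm.continuous.comp h1
  have hGl : Tendsto G l (nhds g) := (hgc.tendsto u₀).comp hu0
  have hVul : Tendsto (fun s => V (u s)) l (nhds (V u₀)) := (hVc.tendsto u₀).comp hu0
  -- chain rule
  have hVu : ∀ r, 0 < r → HasDerivAt (fun s => V (u s)) (⟪G r, u' r⟫) r := by
    intro r hr
    have h1 : HasFDerivAt V (InnerProductSpace.toDual ℝ _ (G r)) (u r) :=
      (hVd (u r)).hasGradientAt.hasFDerivAt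
    have h2 := h1.comp_hasDerivAt r (hu r hr)
    exact h2.congr_deriv (by simp [InnerProductSpace.toDual_apply_apply])
  set du' : ℝ → EuclideanSpace ℝ (Fin n) := fun r => -((D - 1) / r) • u' r + G r with hdu'def
  have hup' : ∀ r, 0 < r → HasDerivAt u' (du' r) r := by
    intro r hr; exact hu' r hr
  have hP : ∀ r, 0 < r →
      HasDerivAt (fun s => ⟪u' s, u' s⟫) (2 * ⟪du' r, u' r⟫) r := by
    intro r hr
    have h1 := (hup' r hr).inner ℝ (hup' r hr)
    refine h1.congr_deriv ?_
    rw [real_inner_comm]; ring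
  set N : ℝ → ℝ := fun s => V (u s) - ⟪u' s, u' s⟫ / 2 with hNdef
  have hN : ∀ r, 0 < r → HasDerivAt N ((D - 1) / r * ⟪u' r, u' r⟫) r := by
    intro r hr
    have h1 := (hVu r hr).sub ((hP r hr).div_const 2)
    refine h1.congr_deriv ?_
    have h2 : ⟪du' r, u' r⟫ = -((D - 1) / r) * ⟪u' r, u' r⟫ + ⟪G r, u' r⟫ := by
      show ⟪-((D - 1) / r) • u' r + G r, u' r⟫ = _
      rw [inner_add_left, real_inner_smul_left]
    rw [h2]; ring
  have hψ : ∀ r, 0 < r → HasDerivAt (fun s => ⟪u s, g⟫) (⟪u' r, g⟫) r := by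
    intro r hr
    have h1 := (hu r hr).inner ℝ (hasDerivAt_const r g)
    simpa using h1
  set w : ℝ → EuclideanSpace ℝ (Fin n) := fun s => s ^ (m + 1) • u' s with hwdef
  have hw : ∀ r, 0 < r → HasDerivAt w (r ^ (m + 1) • G r) r := by
    intro r hr
    have h1 := (hasDerivAt_pow (m + 1) r).smul (hup' r hr)
    refine h1.congr_deriv ?_
    have hr0 : r ≠ 0 := hr.ne'
    have hcoef : r ^ (m + 1) * -((D - 1) / r) + ((m + 1 : ℕ) : ℝ) * r ^ (m + 1 - 1) = 0 := by
      rw [hDdef]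
      have hss : r ^ (m + 1) = r ^ m * r := pow_succ r m
      simp only [Nat.add_sub_cancel]
      push_cast
      rw [hss]
      field_simp
      ring
    rw [show du' r = -((D - 1) / r) • u' r + G r from rfl, smul_add, smul_smul]
    rw [add_right_comm, ← add_smul, hcoef, zero_smul, zero_add]
  set h : ℝ → EuclideanSpace ℝ (Fin n) := fun s => w s - (s ^ (m + 2) / D) • g with hhdef
  have hh : ∀ r, 0 < r → HasDerivAt h (r ^ (m + 1) • (G r - g)) r := by
    intro r hr
    have h2 : HasDerivAt (fun s : ℝ => (s ^ (m + 2) / D) • g) (r ^ (m + 1) • g) r := by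
      have h3 := ((hasDerivAt_pow (m + 2) r).div_const D).smul_const g
      refine h3.congr_deriv ?_
      have : ((m + 2 : ℕ) : ℝ) * r ^ (m + 2 - 1) / D = r ^ (m + 1) := by
        rw [hDdef]
        have hne : ((m + 2 : ℕ) : ℝ) ≠ 0 := by positivity
        field_simp
        rfl
      rw [this]
    have h4 := (hw r hr).sub h2
    rw [smul_sub]
    exact h4
  -- limits at 0+
  have hpowl : ∀ k : ℕ, 0 < k → Tendsto (fun s : ℝ => s ^ k) l (nhds 0) := by
    intro k hk
    have h1 : Tendsto (fun s : ℝ => s ^ k) (nhds 0) (nhds ((0:ℝ) ^ k)) :=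
      (continuous_pow k).tendsto 0
    rw [zero_pow hk.ne'] at h1
    exact h1.mono_left nhdsWithin_le_nhds
  have hwl : Tendsto w l (nhds 0) := by
    have := (hpowl (m + 1) (Nat.succ_pos m)).smul hu'0
    simpa using this
  have hhl : Tendsto h l (nhds 0) := by
    have h2 : Tendsto (fun s : ℝ => (s ^ (m + 2) / D) • g) l (nhds 0) := by
      have := ((hpowl (m + 2) (by omega)).div_const D).smul_const g
      simpa using this
    simpa using hwl.sub h2
  have hPl : Tendsto (fun s => ⟪u' s, u' s⟫) l (nhds 0) := by
    have h1 : Tendsto (fun s => ⟪u' s, u' s⟫) l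
        (nhds (⟪(0 : EuclideanSpace ℝ (Fin n)), (0 : EuclideanSpace ℝ (Fin n))⟫)) :=
      hu'0.inner hu'0
    simpa using h1
  have hNl : Tendsto N l (nhds (V u₀)) := by
    have := hVul.sub (hPl.div_const 2)
    simpa [hNdef] using this
  have hψl : Tendsto (fun s => ⟪u s, g⟫) l (nhds (⟪u₀, g⟫)) :=
    hu0.inner tendsto_const_nhds
  -- choice of ε and r₁
  set ε : ℝ := A / (100 * D) with hεdef
  have hεpos : 0 < ε := by
    rw [hεdef]
    exact div_pos hApos (by linarith)
  clear_value ε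
  obtain ⟨r₁, hr₁pos, hr₁⟩ : ∃ r₁ > (0:ℝ), ∀ s ∈ Ioc (0:ℝ) r₁, ‖G s - g‖ ≤ ε := by
    have hev : ∀ᶠ s in l, ‖G s - g‖ ≤ ε := by
      have h1 := Metric.tendsto_nhds.mp hGl ε hεpos
      filter_upwards [h1] with s hs
      rw [dist_eq_norm] at hs
      exact hs.le
    rw [Filter.eventually_iff, hldef, mem_nhdsGT_iff_exists_Ioc_subset] at hev
    obtain ⟨r₁, hr₁, hsub⟩ := hev
    exact ⟨r₁, hr₁, fun s hs => hsub hs⟩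
  -- main derivative estimate
  have hu'est : ∀ s ∈ Ioc (0:ℝ) r₁, ‖u' s - (s / D) • g‖ ≤ ε * s := by
    intro s hs
    obtain ⟨hs0, hsr⟩ := hs
    have key : ∀ a ∈ Ioo (0:ℝ) s, ‖h s - h a‖ ≤ ε * s ^ (m + 1) * (s - a) := by
      intro a ha
      have hder : ∀ t ∈ Icc a s,
          HasDerivWithinAt h (t ^ (m + 1) • (G t - g)) (Icc a s) t := by
        intro t ht
        exact (hh t (lt_of_lt_of_le ha.1 ht.1)).hasDerivWithinAt
      have hbound : ∀ t ∈ Icc a s, ‖t ^ (m + 1) • (G t - g)‖ ≤ ε * s ^ (m + 1) := by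
        intro t ht
        have ht0 : 0 < t := lt_of_lt_of_le ha.1 ht.1
        have htr : t ∈ Ioc (0:ℝ) r₁ := ⟨ht0, le_trans ht.2 hsr⟩
        rw [norm_smul, Real.norm_eq_abs, abs_of_pos (pow_pos ht0 _)]
        have h1 : t ^ (m + 1) ≤ s ^ (m + 1) := pow_le_pow_left₀ ht0.le ht.2 _
        have h2 := hr₁ t htr
        calc t ^ (m + 1) * ‖G t - g‖ ≤ s ^ (m + 1) * ε := by
              apply mul_le_mul h1 h2 (norm_nonneg _) (pow_nonneg hs0.le _)
          _ = ε * s ^ (m + 1) := mul_comm _ _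
      have := Convex.norm_image_sub_le_of_norm_hasDerivWithin_le hder hbound (convex_Icc a s)
        (left_mem_Icc.2 (le_of_lt ha.2)) (right_mem_Icc.2 (le_of_lt ha.2))
      rw [Real.norm_eq_abs, abs_of_nonneg (by linarith [ha.2] : (0:ℝ) ≤ s - a)] at this
      linarith [this]
    have hnorm : ‖h s‖ ≤ ε * s ^ (m + 1) * s := by
      have htend : Tendsto (fun a => ‖h s - h a‖) l (nhds ‖h s‖) := by
        have := (tendsto_const_nhds (x := h s) (f := l)).sub hhl
        simpa using this.norm
      refine le_of_tendsto htend ?_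
      filter_upwards [Ioo_mem_nhdsGT_of_mem (show (0:ℝ) ∈ Ico (0:ℝ) s from ⟨le_refl _, hs0⟩)]
        with a ha
      calc ‖h s - h a‖ ≤ ε * s ^ (m + 1) * (s - a) := key a ha
        _ ≤ ε * s ^ (m + 1) * s := by
            have : 0 ≤ ε * s ^ (m + 1) := mul_nonneg hεpos.le (pow_nonneg hs0.le _)
            nlinarith [ha.1]
    have hsp : (s : ℝ) ^ (m + 1) ≠ 0 := pow_ne_zero _ hs0.ne'
    have hs1 : u' s - (s / D) • g = (s ^ (m + 1))⁻¹ • h s := by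
      rw [hhdef]
      simp only [hwdef, smul_sub, smul_smul, inv_mul_cancel₀ hsp, one_smul]
      congr 2
      rw [hDdef]
      have hpow : s ^ (m + 2) = s ^ (m + 1) * s := pow_succ s (m+1)
      have hne : ((m + 2 : ℕ) : ℝ) ≠ 0 := by positivity
      field_simp
      rw [hpow]; ring
    rw [hs1, norm_smul, Real.norm_eq_abs, abs_of_pos (inv_pos.mpr (pow_pos hs0 (m+1)))]
    rw [inv_mul_le_iff₀ (pow_pos hs0 (m+1))]
    calc ‖h s‖ ≤ ε * s ^ (m + 1) * s := hnorm
      _ = s ^ (m + 1) * (ε * s) := by ring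
  -- constants
  set c : ℝ := A / D - ε with hcdef
  have hcpos : 0 < c := by
    rw [hcdef, hεdef]
    have : A / (100 * D) < A / D := by
      apply div_lt_div_of_pos_left hApos hDpos
      nlinarith
    linarith
  set K : ℝ := (A + ε) * (A / D + ε) with hKdef
  have hKpos : 0 < K := by
    rw [hKdef]
    have h1 : 0 < A / D := div_pos hApos hDpos
    exact mul_pos (by linarith) (by linarith)
  clear_value c K
  -- pointwise estimates
  have hlow : ∀ s ∈ Ioc (0:ℝ) r₁, s * c ≤ ‖u' s‖ := by
    intro s hs
    have h1 := hu'est s hs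
    have h2 : ‖(s / D) • g‖ = s / D * A := by
      rw [hAdef, norm_smul, Real.norm_eq_abs, abs_of_pos (div_pos hs.1 hDpos)]
    have h3 := norm_sub_norm_le ((s / D) • g) (u' s)
    rw [norm_sub_rev] at h3
    rw [h2] at h3
    have : s * c = s / D * A - ε * s := by rw [hcdef]; ring
    linarith
  have hupb : ∀ s ∈ Ioc (0:ℝ) r₁, ‖u' s‖ ≤ s * (A / D + ε) := by
    intro s hs
    have h1 := hu'est s hs
    have h2 : ‖(s / D) • g‖ = s / D * A := by
      rw [hAdef, norm_smul, Real.norm_eq_abs, abs_of_pos (div_pos hs.1 hDpos)]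
    have h3 := norm_le_norm_add_norm_sub' (u' s) ((s / D) • g)
    rw [h2] at h3
    have : s * (A / D + ε) = s / D * A + ε * s := by ring
    linarith
  have hinner : ∀ s ∈ Ioc (0:ℝ) r₁, s * (A * c) ≤ ⟪u' s, g⟫ := by
    intro s hs
    have h1 : ⟪u' s, g⟫ = ⟪(s / D) • g, g⟫ + ⟪u' s - (s / D) • g, g⟫ := by
      rw [← inner_add_left]; congr 1; abel
    have h2 : ⟪(s / D) • g, g⟫ = s / D * (A * A) := by
      rw [hAdef, real_inner_smul_left, real_inner_self_eq_norm_mul_norm]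
    have h3 : |⟪u' s - (s / D) • g, g⟫| ≤ ε * s * A := by
      calc |⟪u' s - (s / D) • g, g⟫| ≤ ‖u' s - (s / D) • g‖ * ‖g‖ :=
            abs_real_inner_le_norm _ _
        _ ≤ ε * s * A := by
            rw [hAdef]
            apply mul_le_mul_of_nonneg_right (hu'est s hs) (norm_nonneg _)
    have h4 : -(ε * s * A) ≤ ⟪u' s - (s / D) • g, g⟫ := neg_le_of_abs_le h3
    have : s * (A * c) = s / D * (A * A) - ε * s * A := by rw [hcdef]; ring
    linarith
  have hGn : ∀ s ∈ Ioc (0:ℝ) r₁, ‖G s‖ ≤ A + ε := by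
    intro s hs
    have h2 := hr₁ s hs
    have h3 := norm_le_norm_add_norm_sub' (G s) g
    rw [← hAdef] at h3
    linarith
  have hGub : ∀ s ∈ Ioc (0:ℝ) r₁, ⟪G s, u' s⟫ ≤ K * s := by
    intro s hs
    calc ⟪G s, u' s⟫ ≤ ‖G s‖ * ‖u' s‖ := real_inner_le_norm _ _
      _ ≤ (A + ε) * (s * (A / D + ε)) := by
          apply mul_le_mul (hGn s hs) (hupb s hs) (norm_nonneg _) (by linarith)
      _ = K * s := by rw [hKdef]; ring
  -- strict monotonicity of ψ on (0, r₁]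
  have hψmono : StrictMonoOn (fun s => ⟪u s, g⟫) (Ioc 0 r₁) := by
    apply strictMonoOn_of_deriv_pos (convex_Ioc 0 r₁)
    · intro x hx; exact (hψ x hx.1).continuousAt.continuousWithinAt
    · intro x hx
      rw [interior_Ioc] at hx
      rw [(hψ x hx.1).deriv]
      have h1 := hinner x ⟨hx.1, hx.2.le⟩
      nlinarith [hx.1, mul_pos hApos hcpos]
  have hψ0 : ∀ s ∈ Ioc (0:ℝ) r₁, ⟪u₀, g⟫ < ⟪u s, g⟫ := by
    intro s hs
    have hhalf : s / 2 ∈ Ioc (0:ℝ) r₁ := ⟨half_pos hs.1, by linarith [hs.2, hs.1]⟩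
    have h2 : ⟪u₀, g⟫ ≤ ⟪u (s / 2), g⟫ := by
      refine le_of_tendsto hψl ?_
      filter_upwards [Ioc_mem_nhdsGT_of_mem
        (show (0:ℝ) ∈ Ico (0:ℝ) (s / 2) from ⟨le_refl _, half_pos hs.1⟩)] with a ha
      exact hψmono.monotoneOn ⟨ha.1, le_trans ha.2 hhalf.2⟩ hhalf ha.2
    have h3 : ⟪u (s / 2), g⟫ < ⟪u s, g⟫ :=
      hψmono hhalf hs (by linarith [hs.1])
    linarith
  -- energy estimates
  set q : ℝ → ℝ := fun s => (D - 1) * c ^ 2 * s ^ 2 / 2 with hqdef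
  have hq : ∀ s : ℝ, HasDerivAt q ((D - 1) * c ^ 2 * s) s := by
    intro s
    have h1 := ((hasDerivAt_pow 2 s).const_mul ((D - 1) * c ^ 2)).div_const 2
    refine h1.congr_deriv ?_
    push_cast
    ring
  have hNq : ∀ a ∈ Ioc (0:ℝ) r₁, N a + (q r₁ - q a) ≤ N r₁ := by
    intro a ha
    have h1 : (fun s => N s - q s) a ≤ (fun s => N s - q s) r₁ := by
      apply aux_mono_once (f' := fun s => (D - 1) / s * ⟪u' s, u' s⟫ - (D - 1) * c ^ 2 * s)
        _ _ ha.2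
      · intro x hx
        have hx0 : 0 < x := lt_of_lt_of_le ha.1 hx.1
        exact (hN x hx0).sub (hq x)
      · intro x hx
        have hx0 : 0 < x := lt_of_lt_of_le ha.1 hx.1
        have hxm : x ∈ Ioc (0:ℝ) r₁ := ⟨hx0, hx.2⟩
        have h2 := hlow x hxm
        have h3 : ⟪u' x, u' x⟫ = ‖u' x‖ ^ 2 := real_inner_self_eq_norm_sq (u' x)
        have h4 : (x * c) ^ 2 ≤ ‖u' x‖ ^ 2 := by
          apply pow_le_pow_left₀ (mul_nonneg hx0.le hcpos.le) h2
        have h6 : 0 ≤ (D - 1) / x := div_nonneg (by linarith) hx0.le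
        have h5 : (D - 1) * c ^ 2 * x = (D - 1) / x * (x * c) ^ 2 := by
          field_simp
        rw [h3, sub_nonneg, h5]
        exact mul_le_mul_of_nonneg_left h4 h6
    simp only at h1
    linarith
  have hNmono : ∀ r, r₁ ≤ r → N r₁ ≤ N r := by
    intro r hr
    apply aux_mono_once (f' := fun s => (D - 1) / s * ⟪u' s, u' s⟫) _ _ hr
    · intro x hx
      exact hN x (lt_of_lt_of_le hr₁pos hx.1)
    · intro x hx
      have hx0 : 0 < x := lt_of_lt_of_le hr₁pos hx.1
      apply mul_nonneg (div_nonneg (by linarith) hx0.le) real_inner_self_nonneg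
  have hqcont : Tendsto q l (nhds 0) := by
    have h1 : Tendsto q (nhds 0) (nhds (q 0)) := by
      apply Continuous.tendsto
      rw [hqdef]
      continuity
    have h2 : q 0 = 0 := by rw [hqdef]; simp
    rw [h2] at h1
    exact h1.mono_left nhdsWithin_le_nhds
  have hVlow : ∀ r, r₁ ≤ r → V u₀ + q r₁ ≤ V (u r) := by
    intro r hr
    have h1 : V u₀ + q r₁ ≤ N r₁ := by
      have htend : Tendsto (fun a => N a + (q r₁ - q a)) l (nhds (V u₀ + (q r₁ - 0))) :=
        hNl.add (tendsto_const_nhds.sub hqcont)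
      rw [sub_zero] at htend
      refine le_of_tendsto htend ?_
      filter_upwards [Ioc_mem_nhdsGT_of_mem
        (show (0:ℝ) ∈ Ico (0:ℝ) r₁ from ⟨le_refl _, hr₁pos⟩)] with a ha
      exact hNq a ha
    have h2 : N r ≤ V (u r) := by
      have h3 : (0:ℝ) ≤ ⟪u' r, u' r⟫ := real_inner_self_nonneg
      rw [hNdef]
      simp only
      linarith
    linarith [hNmono r hr]
  have hVup : ∀ rs ∈ Ioc (0:ℝ) r₁, V (u rs) ≤ V u₀ + K * rs ^ 2 / 2 := by
    intro rs hrs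
    have hmain : ∀ a ∈ Ioc (0:ℝ) rs,
        V (u rs) ≤ V (u a) + K * rs ^ 2 / 2 := by
      intro a ha
      have hf : ∀ x ∈ Icc a rs, HasDerivAt (fun s => K * s ^ 2 / 2 - V (u s))
          (K * x - ⟪G x, u' x⟫) x := by
        intro x hx
        have hx0 : 0 < x := lt_of_lt_of_le ha.1 hx.1
        have h1 := (((hasDerivAt_pow 2 x).const_mul K).div_const 2).sub (hVu x hx0)
        refine h1.congr_deriv ?_
        push_cast
        ring
      have h0 : ∀ x ∈ Icc a rs, 0 ≤ K * x - ⟪G x, u' x⟫ := by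
        intro x hx
        have hx0 : 0 < x := lt_of_lt_of_le ha.1 hx.1
        have hxm : x ∈ Ioc (0:ℝ) r₁ := ⟨hx0, le_trans hx.2 hrs.2⟩
        linarith [hGub x hxm]
      have h2 := aux_mono_once hf h0 ha.2
      have h3 : 0 ≤ K * a ^ 2 := mul_nonneg hKpos.le (sq_nonneg a)
      linarith
    have htend : Tendsto (fun a => V (u a) + K * rs ^ 2 / 2) l
        (nhds (V u₀ + K * rs ^ 2 / 2)) := hVul.add tendsto_const_nhds
    refine ge_of_tendsto htend ?_
    filter_upwards [Ioc_mem_nhdsGT_of_mem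
      (show (0:ℝ) ∈ Ico (0:ℝ) rs from ⟨le_refl _, hrs.1⟩)] with a ha
    exact hmain a ha
  have hqval : q r₁ = (D - 1) * c ^ 2 * r₁ ^ 2 / 2 := by rw [hqdef]
  clear_value q N w h du' G l
  clear hN hNq hNmono hq hqcont hP hVu hw hh hwl hhl hPl hNl hu'est hlow hupb hGn hGub
    hψ hψl hVul hGl hgc hVd hVc hup' hu' hu hu0 hu'0 hpowl hr₁ hNdef hqdef hwdef hhdef
    hdu'def hGdef hldef hV
  -- the numeric inequality
  have hnum : K ≤ 4 * (D - 1) * c ^ 2 := by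
    rw [hKdef, hcdef, hεdef]
    have h99 : A / D - A / (100 * D) = 99 * A / (100 * D) := by field_simp; ring
    have h101 : A / D + A / (100 * D) = 101 * A / (100 * D) := by field_simp; ring
    have h100 : A + A / (100 * D) = (100 * D + 1) * A / (100 * D) := by field_simp
    rw [h99, h101, h100, div_pow, div_mul_div_comm, ← mul_div_assoc]
    rw [div_le_div_iff₀ (by nlinarith) (by nlinarith)]
    have hA2 : 0 < A * A := mul_pos hApos hApos
    nlinarith [mul_pos hA2 (mul_pos hDpos hDpos), mul_pos hA2 hDpos,
      mul_le_mul_of_nonneg_left hD2 hA2.le]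
  have hDm1 : (0:ℝ) < D - 1 := by linarith
  have hq1pos : 0 < q r₁ := by
    rw [hqval]
    exact div_pos (mul_pos (mul_pos hDm1 (pow_pos hcpos 2)) (pow_pos hr₁pos 2)) two_pos
  -- conclusion
  refine ⟨r₁ / 2, by linarith, ?_, ?_⟩
  · intro r hr0 hrh
    have hmem : r ∈ Ioc (0:ℝ) r₁ := ⟨hr0, by linarith⟩
    intro heq
    have h1 := hinner r hmem
    rw [heq] at h1
    simp only [inner_zero_left] at h1
    nlinarith [mul_pos hApos hcpos]
  · intro rstar hrstar r hr heq
    obtain ⟨hrs0, hrsu⟩ := hrstar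
    have hr0 : (0:ℝ) ≤ r := hr
    by_contra hne
    have hψeq : ⟪(if r = 0 then u₀ else u r), g⟫ = ⟪(if rstar = 0 then u₀ else u rstar), g⟫ := by
      rw [heq]
    have hVeq : V (if r = 0 then u₀ else u r) = V (if rstar = 0 then u₀ else u rstar) := by
      rw [heq]
    rcases le_or_gt r r₁ with hcase | hcase
    · have mono2 : ∀ x y : ℝ, 0 ≤ x → y ≤ r₁ → x < y →
          ⟪(if x = 0 then u₀ else u x), g⟫ < ⟪(if y = 0 then u₀ else u y), g⟫ := by
        intro x y hx hy hxy
        have hy0 : 0 < y := lt_of_le_of_lt hx hxy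
        rw [if_neg hy0.ne']
        rcases eq_or_lt_of_le hx with heq0 | hx0
        · rw [if_pos heq0.symm]
          exact hψ0 y ⟨hy0, hy⟩
        · rw [if_neg hx0.ne']
          exact hψmono ⟨hx0, by linarith⟩ ⟨hy0, hy⟩ hxy
      rcases lt_trichotomy r rstar with hlt | heqq | hgt
      · exact absurd hψeq (ne_of_lt (mono2 r rstar hr0 (by linarith) hlt))
      · exact hne heqq
      · exact absurd hψeq (ne_of_gt (mono2 rstar r hrs0 hcase hgt))
    · have hrpos : 0 < r := by linarith
      rw [if_neg hrpos.ne'] at hVeq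
      have h1 : V u₀ + q r₁ ≤ V (u r) := hVlow r hcase.le
      rcases eq_or_lt_of_le hrs0 with heq0 | hrspos
      · rw [if_pos heq0.symm] at hVeq
        linarith
      · rw [if_neg hrspos.ne'] at hVeq
        have h2 : V (u rstar) ≤ V u₀ + K * rstar ^ 2 / 2 :=
          hVup rstar ⟨hrspos, by linarith⟩
        have h3 : K * rstar ^ 2 / 2 < q r₁ := by
          have h4 : K * rstar ^ 2 < K * (r₁ / 2) ^ 2 :=
            mul_lt_mul_of_pos_left
              (pow_lt_pow_left₀ hrsu hrs0 (by norm_num)) hKpos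
          have h5 : K * (r₁ / 2) ^ 2 ≤ (D - 1) * c ^ 2 * r₁ ^ 2 := by
            have h6 := mul_le_mul_of_nonneg_right hnum
              (le_of_lt (pow_pos (by linarith : (0:ℝ) < r₁ / 2) 2))
            nlinarith [h6]
          rw [hqval]
          linarith
        linarith
end

section
/- Let d ≥ 2 be an integer, let R > 0, and let V : ℝⁿ → ℝ be of class C¹ and quadratic past radius R. Let u : (0,∞) → ℝⁿ be a radial profile for V such that u(r) converges and u'(r) → 0 as r → 0⁺, and such that u(r) → u_∞ as r → +∞ for some point u_∞ ∈ ℝⁿ with ∇V(u_∞) = 0. Then sup_{r ∈ (0,∞)} |u(r)| < R. -/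
open Set Filter
open scoped RealInnerProductSpace Topology

section aux

variable {E : Type*} [NormedAddCommGroup E] [InnerProductSpace ℝ E] [CompleteSpace E]

/-- The function `w ↦ ‖w‖²/2` has gradient `x` at `x`. -/
lemma aux_grad_sq (x : E) : HasGradientAt (fun w : E => ‖w‖ ^ 2 / 2) x x := by
  rw [hasGradientAt_iff_hasFDerivAt]
  have h := ((hasFDerivAt_id x).inner ℝ (hasFDerivAt_id x)).const_smul (1/2 : ℝ)
  simp only [id_eq] at h
  have hfg : (fun w : E => (1/2 : ℝ) • (⟪w, w⟫ : ℝ)) = fun w : E => ‖w‖ ^ 2 / 2 := by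
    funext w; rw [smul_eq_mul, real_inner_self_eq_norm_sq]; ring
  rw [show ((1/2:ℝ) • fun t : E => (⟪t, t⟫ : ℝ)) = fun w : E => (1/2 : ℝ) • (⟪w, w⟫ : ℝ) from rfl, hfg] at h
  refine h.congr_fderiv ?_
  ext v
  simp [fderivInnerCLM_apply, real_inner_comm, InnerProductSpace.toDual_apply_apply]
  ring

lemma aux_grad_cont (V : E → ℝ) (hV : ContDiff ℝ 1 V) : Continuous (gradient V) := by
  have : gradient V = fun x => (InnerProductSpace.toDual ℝ E).symm (fderiv ℝ V x) := rfl
  rw [this]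
  exact (InnerProductSpace.toDual ℝ E).symm.continuous.comp (hV.continuous_fderiv one_ne_zero)

/-- For a potential quadratic past radius `R`, the gradient equals the identity on
`‖w‖ ≥ R` (including the boundary, by continuity of the gradient). -/
lemma aux_grad_eq (R : ℝ) (hR : 0 < R) (V : E → ℝ) (hV : ContDiff ℝ 1 V)
    (hquad : ∀ w : E, R ≤ ‖w‖ → V w = ‖w‖ ^ 2 / 2) :
    ∀ w : E, R ≤ ‖w‖ → gradient V w = w := by
  have hgt : ∀ w : E, R < ‖w‖ → gradient V w = w := by
    intro w hw
    have hopen : IsOpen {v : E | R < ‖v‖} := isOpen_lt continuous_const continuous_norm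
    have heq : V =ᶠ[𝓝 w] fun v => ‖v‖ ^ 2 / 2 :=
      eventually_of_mem (hopen.mem_nhds hw) (fun v hv => hquad v (le_of_lt hv))
    rw [heq.gradient_eq, (aux_grad_sq w).gradient]
  intro w hw
  rcases lt_or_eq_of_le hw with h | h
  · exact hgt w h
  · have hne : NeBot (𝓝[>] (1:ℝ)) := inferInstance
    have h1 : Tendsto (fun t : ℝ => t • w) (𝓝[>] (1:ℝ)) (𝓝 w) := by
      have := ((continuous_id.smul (continuous_const (y := w))).tendsto 1).mono_left
        (nhdsWithin_le_nhds (s := Ioi (1:ℝ)))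
      convert this using 2 <;> simp
    have h2 : Tendsto (fun t : ℝ => gradient V (t • w)) (𝓝[>] (1:ℝ)) (𝓝 (gradient V w)) :=
      ((aux_grad_cont V hV).tendsto w).comp h1
    have h3 : Tendsto (fun t : ℝ => gradient V (t • w)) (𝓝[>] (1:ℝ)) (𝓝 w) := by
      refine h1.congr' ?_
      filter_upwards [self_mem_nhdsWithin] with t ht
      refine (hgt (t • w) ?_).symm
      rw [norm_smul, Real.norm_eq_abs, abs_of_pos (lt_trans one_pos ht), ← h]
      nlinarith [mul_pos (sub_pos.mpr (show (1:ℝ) < t from ht)) hR]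
    exact tendsto_nhds_unique h2 h3

omit [CompleteSpace E] in
lemma aux_g_deriv (u u' : ℝ → E) (hu : ∀ r, 0 < r → HasDerivAt u (u' r) r)
    (r : ℝ) (hr : 0 < r) :
    HasDerivAt (fun s => ‖u s‖ ^ 2) (2 * ⟪u r, u' r⟫) r := by
  have h := (hu r hr).inner ℝ (hu r hr)
  have hfg : (fun t => (⟪u t, u t⟫ : ℝ)) = fun t => ‖u t‖ ^ 2 := by
    funext t; rw [real_inner_self_eq_norm_sq]
  rw [hfg] at h
  refine h.congr_deriv ?_
  rw [real_inner_comm (u' r) (u r)]; ring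

lemma aux_phi_deriv (d : ℕ) (hd : 2 ≤ d) (V : E → ℝ) (u u' : ℝ → E)
    (hu : ∀ r, 0 < r → HasDerivAt u (u' r) r)
    (hu' : ∀ r, 0 < r → HasDerivAt u'
      (-(((d : ℝ) - 1) / r) • u' r + gradient V (u r)) r)
    (r : ℝ) (hr : 0 < r) :
    HasDerivAt (fun s => s ^ (d-1) * (2 * ⟪u s, u' s⟫))
      (2 * r ^ (d-1) * (‖u' r‖ ^ 2 + ⟪u r, gradient V (u r)⟫)) r := by
  have hG := ((hu r hr).inner ℝ (hu' r hr)).const_mul 2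
  have hpow := hasDerivAt_pow (d-1) r
  have h := hpow.mul hG
  refine h.congr_deriv ?_
  rw [inner_add_right, inner_smul_right, real_inner_self_eq_norm_sq]
  have hc : ((d - 1 : ℕ) : ℝ) = (d : ℝ) - 1 := by
    rw [Nat.cast_sub (by omega)]; norm_num
  have h2 : d - 1 - 1 = d - 2 := by omega
  have h3 : r ^ (d - 1) = r ^ (d - 2) * r := by
    rw [← pow_succ]; congr 1; omega
  rw [hc, h2, h3]
  have hrne : r ≠ 0 := ne_of_gt hr
  field_simp
  ring

omit [CompleteSpace E] in
lemma aux_phi_lim (d : ℕ) (hd : 2 ≤ d) (u u' : ℝ → E) (u₀ : E)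
    (hu0 : Tendsto u (𝓝[>] 0) (𝓝 u₀)) (hu'0 : Tendsto u' (𝓝[>] 0) (𝓝 0)) :
    Tendsto (fun s => s ^ (d-1) * (2 * ⟪u s, u' s⟫)) (𝓝[>] (0:ℝ)) (𝓝 0) := by
  have h1 : Tendsto (fun s : ℝ => s ^ (d-1)) (𝓝[>] (0:ℝ)) (𝓝 0) := by
    have := ((continuous_pow (d-1)).tendsto (0:ℝ)).mono_left
      (nhdsWithin_le_nhds (s := Ioi (0:ℝ)))
    rwa [zero_pow (by omega : d - 1 ≠ 0)] at this
  have h2 : Tendsto (fun s => (2:ℝ) * ⟪u s, u' s⟫) (𝓝[>] (0:ℝ)) (𝓝 (2 * ⟪u₀, (0:E)⟫)) :=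
    (hu0.inner hu'0).const_mul 2
  rw [inner_zero_right, mul_zero] at h2
  have := h1.mul h2
  rwa [zero_mul] at this

lemma aux_slope_right {f : ℝ → ℝ} {c x : ℝ} (hf : HasDerivAt f c x) (hc : 0 < c) :
    ∀ᶠ y in 𝓝[>] x, f x < f y := by
  have h := hasDerivAt_iff_tendsto_slope.1 hf
  have h2 : ∀ᶠ y in 𝓝[≠] x, 0 < slope f x y := h.eventually_mem (Ioi_mem_nhds hc)
  have h3 : ∀ᶠ y in 𝓝[>] x, 0 < slope f x y :=
    h2.filter_mono (nhdsWithin_mono x (fun y hy => ne_of_gt hy))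
  filter_upwards [h3, self_mem_nhdsWithin] with y hy hyx
  rw [slope_def_field] at hy
  have h4 : (0:ℝ) < y - x := sub_pos.2 hyx
  nlinarith [mul_pos hy h4, div_mul_cancel₀ (f y - f x) (ne_of_gt h4)]

lemma aux_slope_left {f : ℝ → ℝ} {c x : ℝ} (hf : HasDerivAt f c x) (hc : c < 0) :
    ∀ᶠ y in 𝓝[<] x, f x < f y := by
  have h := hasDerivAt_iff_tendsto_slope.1 hf
  have h2 : ∀ᶠ y in 𝓝[≠] x, slope f x y < 0 := h.eventually_mem (Iio_mem_nhds hc)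
  have h3 : ∀ᶠ y in 𝓝[<] x, slope f x y < 0 :=
    h2.filter_mono (nhdsWithin_mono x (fun y hy => ne_of_lt hy))
  filter_upwards [h3, self_mem_nhdsWithin] with y hy hyx
  rw [slope_def_field] at hy
  have h4 : y - x < 0 := sub_neg.2 hyx
  nlinarith [div_mul_cancel₀ (f y - f x) (ne_of_lt h4)]

/-- Forward propagation: if `‖u‖² > R²` with nonnegative radial derivative at some point,
then `u` cannot converge at infinity to a point of norm `< R`. -/
lemma aux_forward (d : ℕ) (hd : 2 ≤ d) (R : ℝ) (hR : 0 < R) (V : E → ℝ) (u u' : ℝ → E)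
    (hu : ∀ r, 0 < r → HasDerivAt u (u' r) r)
    (hu' : ∀ r, 0 < r → HasDerivAt u'
      (-(((d : ℝ) - 1) / r) • u' r + gradient V (u r)) r)
    (hgrad : ∀ w : E, R ≤ ‖w‖ → gradient V w = w)
    (r₂ : ℝ) (hr₂ : 0 < r₂) (hg₂ : R ^ 2 < ‖u r₂‖ ^ 2) (hG₂ : 0 ≤ ⟪u r₂, u' r₂⟫)
    (uinf : E) (hlim : Tendsto u atTop (𝓝 uinf)) (huinf : ‖uinf‖ < R) : False := by
  set g : ℝ → ℝ := fun s => ‖u s‖ ^ 2 with hgdef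
  set φ : ℝ → ℝ := fun s => s ^ (d-1) * (2 * ⟪u s, u' s⟫) with hφdef
  have htg : Tendsto g atTop (𝓝 (‖uinf‖ ^ 2)) := (hlim.norm).pow 2
  have hinf2 : ‖uinf‖ ^ 2 < R ^ 2 := by
    have := norm_nonneg uinf; nlinarith
  have hev : ∀ᶠ r in atTop, g r < R ^ 2 := htg.eventually_mem (Iio_mem_nhds hinf2)
  obtain ⟨r₁, hr₁small, hr₁gt⟩ := (hev.and (eventually_gt_atTop r₂)).exists
  set K : Set ℝ := Icc r₂ r₁ ∩ g ⁻¹' (Iic (R ^ 2)) with hKdef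
  have hgcont : ContinuousOn g (Icc r₂ r₁) := fun x hx =>
    ((aux_g_deriv u u' hu x (lt_of_lt_of_le hr₂ hx.1)).continuousAt).continuousWithinAt
  have hKclosed : IsClosed K := hgcont.preimage_isClosed_of_isClosed isClosed_Icc isClosed_Iic
  have hKne : K.Nonempty := ⟨r₁, ⟨le_of_lt hr₁gt, le_refl _⟩, le_of_lt hr₁small⟩
  have hKbdd : BddBelow K := ⟨r₂, fun x hx => hx.1.1⟩
  set b : ℝ := sInf K with hbdef
  have hbK : b ∈ K := hKclosed.csInf_mem hKne hKbdd
  have hbge : r₂ ≤ b := hbK.1.1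
  have hbgt : r₂ < b := by
    rcases lt_or_eq_of_le hbge with h | h
    · exact h
    · exfalso; have := hbK.2; rw [← h] at this
      exact absurd this (not_le.2 hg₂)
  have hmid : ∀ s, r₂ ≤ s → s < b → R ^ 2 < g s := by
    intro s hs1 hs2
    by_contra hcon
    push_neg at hcon
    have hsK : s ∈ K := ⟨⟨hs1, le_trans (le_of_lt hs2) hbK.1.2⟩, hcon⟩
    exact absurd (csInf_le hKbdd hsK) (not_le.2 hs2)
  have hnorm : ∀ s, r₂ ≤ s → s < b → R ≤ ‖u s‖ := fun s h1 h2 =>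
    le_of_lt (lt_of_pow_lt_pow_left₀ 2 (norm_nonneg _) (hmid s h1 h2))
  have hφcont : ContinuousOn φ (Icc r₂ b) := fun x hx =>
    ((aux_phi_deriv d hd V u u' hu hu' x (lt_of_lt_of_le hr₂ hx.1)).continuousAt).continuousWithinAt
  have hφmono : StrictMonoOn φ (Icc r₂ b) := by
    apply strictMonoOn_of_deriv_pos (convex_Icc _ _) hφcont
    intro x hx
    rw [interior_Icc] at hx
    have hxpos : 0 < x := lt_trans hr₂ hx.1
    rw [(aux_phi_deriv d hd V u u' hu hu' x hxpos).deriv]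
    rw [hgrad (u x) (hnorm x (le_of_lt hx.1) hx.2), real_inner_self_eq_norm_sq]
    have h1 : 0 < x ^ (d-1) := pow_pos hxpos _
    have h2 : R ^ 2 < ‖u x‖ ^ 2 := hmid x (le_of_lt hx.1) hx.2
    nlinarith [sq_nonneg ‖u' x‖, sq_nonneg R]
  have hGpos : ∀ x ∈ Ioc r₂ b, 0 < ⟪u x, u' x⟫ := by
    intro x hx
    have h1 : φ r₂ < φ x := hφmono ⟨le_refl _, le_of_lt hbgt⟩ ⟨le_of_lt hx.1, hx.2⟩ hx.1
    have h2 : 0 ≤ φ r₂ := by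
      simp only [hφdef]
      have : 0 < r₂ ^ (d-1) := pow_pos hr₂ _
      nlinarith
    have h3 : 0 < x ^ (d-1) := pow_pos (lt_trans hr₂ hx.1) _
    simp only [hφdef] at h1 h2
    nlinarith
  have hgmono : StrictMonoOn g (Icc r₂ b) := by
    apply strictMonoOn_of_deriv_pos (convex_Icc _ _)
      (fun x hx => ((aux_g_deriv u u' hu x (lt_of_lt_of_le hr₂ hx.1)).continuousAt).continuousWithinAt)
    intro x hx
    rw [interior_Icc] at hx
    rw [(aux_g_deriv u u' hu x (lt_of_lt_of_le hr₂ (le_of_lt hx.1))).deriv]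
    have := hGpos x ⟨hx.1, le_of_lt hx.2⟩
    linarith
  have hfinal : g r₂ < g b := hgmono ⟨le_refl _, le_of_lt hbgt⟩ ⟨le_of_lt hbgt, le_refl _⟩ hbgt
  have h5 : g b ≤ R ^ 2 := hbK.2
  have h6 : R ^ 2 < g r₂ := hg₂
  linarith

/-- Backward propagation: if `‖u‖² > R²` with negative radial derivative at some point,
then `u` cannot have the prescribed behaviour at the origin. -/
lemma aux_backward (d : ℕ) (hd : 2 ≤ d) (R : ℝ) (hR : 0 < R) (V : E → ℝ) (u u' : ℝ → E)
    (hu : ∀ r, 0 < r → HasDerivAt u (u' r) r)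
    (hu' : ∀ r, 0 < r → HasDerivAt u'
      (-(((d : ℝ) - 1) / r) • u' r + gradient V (u r)) r)
    (hgrad : ∀ w : E, R ≤ ‖w‖ → gradient V w = w)
    (r₀ : ℝ) (hr₀ : 0 < r₀) (hg₀ : R ^ 2 < ‖u r₀‖ ^ 2) (hG₀ : ⟪u r₀, u' r₀⟫ < 0)
    (u₀ : E) (hu0 : Tendsto u (𝓝[>] 0) (𝓝 u₀))
    (hu'0 : Tendsto u' (𝓝[>] 0) (𝓝 0)) : False := by
  set g : ℝ → ℝ := fun s => ‖u s‖ ^ 2 with hgdef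
  set φ : ℝ → ℝ := fun s => s ^ (d-1) * (2 * ⟪u s, u' s⟫) with hφdef
  have hφ0 : Tendsto φ (𝓝[>] (0:ℝ)) (𝓝 0) := aux_phi_lim d hd u u' u₀ hu0 hu'0
  have hglarge : ∀ a ∈ Ioo (0:ℝ) r₀, R ^ 2 ≤ g a := by
    intro a ha
    by_contra hcon
    push_neg at hcon
    set K : Set ℝ := Icc a r₀ ∩ g ⁻¹' (Iic (R ^ 2)) with hKdef
    have hgcont : ContinuousOn g (Icc a r₀) := fun x hx =>
      ((aux_g_deriv u u' hu x (lt_of_lt_of_le ha.1 hx.1)).continuousAt).continuousWithinAt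
    have hKclosed : IsClosed K := hgcont.preimage_isClosed_of_isClosed isClosed_Icc isClosed_Iic
    have hKne : K.Nonempty := ⟨a, ⟨le_refl _, le_of_lt ha.2⟩, le_of_lt hcon⟩
    have hKbdd : BddAbove K := ⟨r₀, fun x hx => hx.1.2⟩
    set c : ℝ := sSup K with hcdef
    have hcK : c ∈ K := hKclosed.csSup_mem hKne hKbdd
    have hcge : a ≤ c := hcK.1.1
    have hcpos : 0 < c := lt_of_lt_of_le ha.1 hcge
    have hclt : c < r₀ := by
      rcases lt_or_eq_of_le hcK.1.2 with h | h
      · exact h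
      · exfalso; have := hcK.2; rw [h] at this
        exact absurd this (not_le.2 hg₀)
    have hmid : ∀ s, c < s → s ≤ r₀ → R ^ 2 < g s := by
      intro s hs1 hs2
      by_contra hcon2
      push_neg at hcon2
      have hsK : s ∈ K := ⟨⟨le_trans hcge (le_of_lt hs1), hs2⟩, hcon2⟩
      exact absurd (le_csSup hKbdd hsK) (not_le.2 hs1)
    have hnorm : ∀ s, c < s → s ≤ r₀ → R ≤ ‖u s‖ := fun s h1 h2 =>
      le_of_lt (lt_of_pow_lt_pow_left₀ 2 (norm_nonneg _) (hmid s h1 h2))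
    have hφmono : StrictMonoOn φ (Icc c r₀) := by
      apply strictMonoOn_of_deriv_pos (convex_Icc _ _) (fun x hx =>
        ((aux_phi_deriv d hd V u u' hu hu' x (lt_of_lt_of_le hcpos hx.1)).continuousAt).continuousWithinAt)
      intro x hx
      rw [interior_Icc] at hx
      have hxpos : 0 < x := lt_trans hcpos hx.1
      rw [(aux_phi_deriv d hd V u u' hu hu' x hxpos).deriv]
      rw [hgrad (u x) (hnorm x hx.1 (le_of_lt hx.2)), real_inner_self_eq_norm_sq]
      have h1 : 0 < x ^ (d-1) := pow_pos hxpos _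
      have h2 : R ^ 2 < ‖u x‖ ^ 2 := hmid x hx.1 (le_of_lt hx.2)
      nlinarith [sq_nonneg ‖u' x‖]
    have hGneg : ∀ x ∈ Ico c r₀, ⟪u x, u' x⟫ < 0 := by
      intro x hx
      have h1 : φ x < φ r₀ := hφmono ⟨hx.1, le_of_lt hx.2⟩ ⟨le_of_lt hclt, le_refl _⟩ hx.2
      have h2 : φ r₀ < 0 := by
        simp only [hφdef]
        have : 0 < r₀ ^ (d-1) := pow_pos hr₀ _
        nlinarith
      have h3 : 0 < x ^ (d-1) := pow_pos (lt_of_lt_of_le hcpos hx.1) _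
      simp only [hφdef] at h1 h2
      nlinarith
    have hganti : StrictAntiOn g (Icc c r₀) := by
      apply strictAntiOn_of_deriv_neg (convex_Icc _ _) (fun x hx =>
        ((aux_g_deriv u u' hu x (lt_of_lt_of_le hcpos hx.1)).continuousAt).continuousWithinAt)
      intro x hx
      rw [interior_Icc] at hx
      rw [(aux_g_deriv u u' hu x (lt_of_lt_of_le hcpos (le_of_lt hx.1))).deriv]
      have := hGneg x ⟨le_of_lt hx.1, hx.2⟩
      linarith
    have hfinal : g r₀ < g c := hganti ⟨le_refl _, le_of_lt hclt⟩ ⟨le_of_lt hclt, le_refl _⟩ hclt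
    have h5 : g c ≤ R ^ 2 := hcK.2
    have h6 : R ^ 2 < g r₀ := hg₀
    linarith
  have hnorm : ∀ s ∈ Ioo (0:ℝ) r₀, R ≤ ‖u s‖ := fun s hs =>
    le_of_pow_le_pow_left₀ two_ne_zero (norm_nonneg _) (hglarge s hs)
  have hφmono : StrictMonoOn φ (Ioc 0 r₀) := by
    apply strictMonoOn_of_deriv_pos (convex_Ioc _ _) (fun x hx =>
      ((aux_phi_deriv d hd V u u' hu hu' x hx.1).continuousAt).continuousWithinAt)
    intro x hx
    rw [interior_Ioc] at hx
    rw [(aux_phi_deriv d hd V u u' hu hu' x hx.1).deriv]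
    rw [hgrad (u x) (hnorm x hx), real_inner_self_eq_norm_sq]
    have h1 : 0 < x ^ (d-1) := pow_pos hx.1 _
    have h2 : R ^ 2 ≤ ‖u x‖ ^ 2 := hglarge x hx
    have hR2 : 0 < R ^ 2 := pow_pos hR 2
    nlinarith [mul_pos h1 (show (0:ℝ) < ‖u' x‖ ^ 2 + ‖u x‖ ^ 2 by nlinarith [sq_nonneg ‖u' x‖])]
  have hφr₀ : φ r₀ < 0 := by
    simp only [hφdef]
    have : 0 < r₀ ^ (d-1) := pow_pos hr₀ _
    nlinarith
  have hev : ∀ᶠ s in 𝓝[>] (0:ℝ), φ r₀ < φ s := hφ0.eventually_mem (Ioi_mem_nhds hφr₀)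
  have hev2 : Ioo (0:ℝ) r₀ ∈ 𝓝[>] (0:ℝ) := Ioo_mem_nhdsGT_of_mem ⟨le_refl _, hr₀⟩
  obtain ⟨s, hs1, hs2⟩ := (hev.and (eventually_of_mem hev2 (fun x hx => hx))).exists
  have := hφmono ⟨hs2.1, le_of_lt hs2.2⟩ ⟨hr₀, le_refl _⟩ hs2.2
  linarith

end aux

/-- Let `V` be a `C¹` potential quadratic past radius `R`, and
let `u` be a radial profile for `V` such that `u` converges and `u' → 0` as
`r → 0⁺`, and `u(r) → u∞` as `r → +∞` with `∇V(u∞) = 0`. Then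
`sup_{r>0} ‖u(r)‖ < R`. -/
theorem radial_profile_a_priori_bound
    {n : ℕ} (hn : 1 ≤ n) {d : ℕ} (hd : 2 ≤ d) (R : ℝ) (hR : 0 < R)
    (V : EuclideanSpace ℝ (Fin n) → ℝ) (hV : ContDiff ℝ 1 V)
    (hquad : ∀ w : EuclideanSpace ℝ (Fin n), R ≤ ‖w‖ → V w = ‖w‖ ^ 2 / 2)
    (u u' : ℝ → EuclideanSpace ℝ (Fin n))
    (hu : ∀ r, 0 < r → HasDerivAt u (u' r) r)
    (hu' : ∀ r, 0 < r → HasDerivAt u'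
      (-(((d : ℝ) - 1) / r) • u' r + gradient V (u r)) r)
    (hu0 : ∃ u₀ : EuclideanSpace ℝ (Fin n),
      Tendsto u (nhdsWithin 0 (Ioi 0)) (nhds u₀))
    (hu'0 : Tendsto u' (nhdsWithin 0 (Ioi 0)) (nhds 0))
    (uinf : EuclideanSpace ℝ (Fin n))
    (hlim : Tendsto u atTop (nhds uinf))
    (hcrit : gradient V uinf = 0) :
    ∃ C : ℝ, C < R ∧ ∀ r, 0 < r → ‖u r‖ ≤ C := by
  obtain ⟨u₀, hu0⟩ := hu0
  have hgrad : ∀ w : EuclideanSpace ℝ (Fin n), R ≤ ‖w‖ → gradient V w = w :=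
    aux_grad_eq R hR V hV hquad
  -- the limit at infinity has norm < R
  have huinf : ‖uinf‖ < R := by
    by_contra h
    push_neg at h
    have h2 := hgrad uinf h
    rw [hcrit] at h2
    rw [← h2, norm_zero] at h
    linarith
  -- any point with ‖u r‖² > R² yields a contradiction
  have final : ∀ r, 0 < r → R ^ 2 < ‖u r‖ ^ 2 → False := by
    intro r hr hgr
    rcases le_or_gt 0 (⟪u r, u' r⟫ : ℝ) with h | h
    · exact aux_forward d hd R hR V u u' hu hu' hgrad r hr hgr h uinf hlim huinf
    · exact aux_backward d hd R hR V u u' hu hu' hgrad r hr hgr h u₀ hu0 hu'0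
  -- hence ‖u r‖ < R everywhere
  have key : ∀ r, 0 < r → ‖u r‖ ^ 2 < R ^ 2 := by
    intro r hr
    by_contra hcon
    push_neg at hcon
    rcases lt_or_eq_of_le hcon with h | h
    · exact final r hr h
    · -- boundary case : ‖u r‖² = R²
      have hnr : R ≤ ‖u r‖ := le_of_pow_le_pow_left₀ two_ne_zero (norm_nonneg _) (le_of_eq h)
      rcases lt_trichotomy (⟪u r, u' r⟫ : ℝ) 0 with hG | hG | hG
      · -- decreasing : bigger points to the left
        have hd1 := aux_g_deriv u u' hu r hr
        have hev := aux_slope_left hd1 (by linarith)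
        have hev2 : Ioo (0:ℝ) r ∈ 𝓝[<] r := Ioo_mem_nhdsLT_of_mem ⟨hr, le_refl r⟩
        obtain ⟨y, hy1, hy2⟩ := (hev.and (eventually_of_mem hev2 (fun x hx => hx))).exists
        exact final y hy2.1 (by rw [h]; exact hy1)
      · -- critical point on the boundary sphere : use the second-order information
        have hder := aux_phi_deriv d hd V u u' hu hu' r hr
        rw [hgrad (u r) hnr, real_inner_self_eq_norm_sq, ← h] at hder
        have hpos : 0 < 2 * r ^ (d-1) * (‖u' r‖ ^ 2 + R ^ 2) := by
          have h1 : 0 < r ^ (d-1) := pow_pos hr _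
          have h2 : 0 < R ^ 2 := pow_pos hR 2
          nlinarith [sq_nonneg ‖u' r‖]
        have hev := aux_slope_right hder hpos
        obtain ⟨t, ht, hsub⟩ := mem_nhdsGT_iff_exists_Ioo_subset.1 hev
        set m := (r + t)/2 with hmdef
        have hm : m ∈ Ioo r t := by
          constructor <;> [skip; skip] <;> simp only [hmdef] <;> [linarith [mem_Ioi.1 ht]; linarith [mem_Ioi.1 ht]]
        have hGpos : ∀ x ∈ Ioo r m, 0 < (⟪u x, u' x⟫ : ℝ) := by
          intro x hx
          have hx' : x ∈ Ioo r t := ⟨hx.1, lt_trans hx.2 hm.2⟩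
          have h1 := hsub hx'
          simp only [mem_setOf_eq, hG, mul_zero, zero_mul] at h1
          -- h1 : r ^ (d-1) * (2 * ⟪u r, u' r⟫) < x ^ (d-1) * (2 * ⟪u x, u' x⟫) with ⟪u r,u' r⟫ = 0
          have h3 : 0 < x ^ (d-1) := pow_pos (lt_trans hr hx.1) _
          nlinarith
        have hgmono : StrictMonoOn (fun s => ‖u s‖ ^ 2) (Icc r m) := by
          apply strictMonoOn_of_deriv_pos (convex_Icc _ _) (fun x hx =>
            ((aux_g_deriv u u' hu x (lt_of_lt_of_le hr hx.1)).continuousAt).continuousWithinAt)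
          intro x hx
          rw [interior_Icc] at hx
          rw [(aux_g_deriv u u' hu x (lt_of_lt_of_le hr (le_of_lt hx.1))).deriv]
          have := hGpos x hx
          linarith
        have hlt : ‖u r‖ ^ 2 < ‖u m‖ ^ 2 :=
          hgmono ⟨le_refl _, le_of_lt hm.1⟩ ⟨le_of_lt hm.1, le_refl _⟩ hm.1
        exact final m (lt_trans hr hm.1) (by rw [h]; exact hlt)
      · -- increasing : bigger points to the right
        have hd1 := aux_g_deriv u u' hu r hr
        have hev := aux_slope_right hd1 (by linarith)
        obtain ⟨y, hy1, hy2⟩ := (hev.and self_mem_nhdsWithin).exists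
        exact final y (lt_trans hr hy2) (by rw [h]; exact hy1)
  -- the limit at the origin has norm < R
  have hu₀le : ‖u₀‖ ≤ R := by
    have hev : ∀ᶠ r in 𝓝[>] (0:ℝ), ‖u r‖ ≤ R :=
      eventually_of_mem self_mem_nhdsWithin
        (fun r hr => le_of_lt (lt_of_pow_lt_pow_left₀ 2 (le_of_lt hR) (key r hr)))
    exact le_of_tendsto hu0.norm hev
  have hu₀lt : ‖u₀‖ < R := by
    rcases lt_or_eq_of_le hu₀le with h | h
    · exact h
    · exfalso
      have hcont : Continuous (fun w : EuclideanSpace ℝ (Fin n) => (⟪w, gradient V w⟫ : ℝ)) :=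
        continuous_id.inner (aux_grad_cont V hV)
      have hval : (⟪u₀, gradient V u₀⟫ : ℝ) = R ^ 2 := by
        rw [hgrad u₀ (le_of_eq h.symm), real_inner_self_eq_norm_sq, h]
      have ht : Tendsto (fun r => (⟪u r, gradient V (u r)⟫ : ℝ)) (𝓝[>] (0:ℝ)) (𝓝 (R ^ 2)) := by
        have := (hcont.tendsto u₀).comp hu0
        rwa [hval] at this
      have hR2 : 0 < R ^ 2 := pow_pos hR 2
      have hev : ∀ᶠ r in 𝓝[>] (0:ℝ), R ^ 2 / 2 < ⟪u r, gradient V (u r)⟫ :=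
        ht.eventually_mem (Ioi_mem_nhds (by linarith))
      obtain ⟨δ, hδ, hsub⟩ := mem_nhdsGT_iff_exists_Ioo_subset.1 hev
      have hδ0 : (0:ℝ) < δ := mem_Ioi.1 hδ
      set φ : ℝ → ℝ := fun s => s ^ (d-1) * (2 * ⟪u s, u' s⟫) with hφdef
      have hφ0 : Tendsto φ (𝓝[>] (0:ℝ)) (𝓝 0) := aux_phi_lim d hd u u' u₀ hu0 hu'0
      have hφmono : StrictMonoOn φ (Ioo 0 δ) := by
        apply strictMonoOn_of_deriv_pos (convex_Ioo _ _) (fun x hx =>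
          ((aux_phi_deriv d hd V u u' hu hu' x hx.1).continuousAt).continuousWithinAt)
        intro x hx
        rw [interior_Ioo] at hx
        rw [(aux_phi_deriv d hd V u u' hu hu' x hx.1).deriv]
        have h1 : 0 < x ^ (d-1) := pow_pos hx.1 _
        have h2 := hsub hx
        simp only [mem_setOf_eq] at h2
        nlinarith [sq_nonneg ‖u' x‖, mul_pos h1 (show (0:ℝ) < ‖u' x‖ ^ 2 + ⟪u x, gradient V (u x)⟫ by nlinarith [sq_nonneg ‖u' x‖])]
      have hφnn : ∀ t ∈ Ioo (0:ℝ) δ, 0 ≤ φ t := by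
        intro t htm
        have hev2 : ∀ᶠ s in 𝓝[>] (0:ℝ), φ s ≤ φ t :=
          eventually_of_mem (Ioo_mem_nhdsGT_of_mem ⟨le_refl _, htm.1⟩)
            (fun s hs => le_of_lt (hφmono ⟨hs.1, lt_trans hs.2 htm.2⟩ htm hs.2))
        exact le_of_tendsto hφ0 hev2
      have hGpos : ∀ t ∈ Ioo (0:ℝ) δ, 0 < (⟪u t, u' t⟫ : ℝ) := by
        intro t htm
        have hhalf : t/2 ∈ Ioo (0:ℝ) δ := ⟨by linarith [htm.1], by linarith [htm.1, htm.2]⟩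
        have h1 : φ (t/2) < φ t := hφmono hhalf htm (by linarith [htm.1])
        have h2 := hφnn (t/2) hhalf
        have h3 : 0 < t ^ (d-1) := pow_pos htm.1 _
        simp only [hφdef] at h1 h2
        nlinarith
      have hgmono : StrictMonoOn (fun s => ‖u s‖ ^ 2) (Ioo 0 δ) := by
        apply strictMonoOn_of_deriv_pos (convex_Ioo _ _) (fun x hx =>
          ((aux_g_deriv u u' hu x hx.1).continuousAt).continuousWithinAt)
        intro x hx
        rw [interior_Ioo] at hx
        rw [(aux_g_deriv u u' hu x hx.1).deriv]
        have := hGpos x hx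
        linarith
      have hhalf : δ/2 ∈ Ioo (0:ℝ) δ := ⟨by linarith, by linarith⟩
      have htg0 : Tendsto (fun r => ‖u r‖ ^ 2) (𝓝[>] (0:ℝ)) (𝓝 (R ^ 2)) := by
        have := (hu0.norm).pow 2
        rwa [h] at this
      have hglim : R ^ 2 ≤ ‖u (δ/2)‖ ^ 2 := by
        have hev2 : ∀ᶠ s in 𝓝[>] (0:ℝ), ‖u s‖ ^ 2 ≤ ‖u (δ/2)‖ ^ 2 :=
          eventually_of_mem (Ioo_mem_nhdsGT_of_mem ⟨le_refl _, hhalf.1⟩)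
            (fun s hs => le_of_lt (hgmono ⟨hs.1, lt_trans hs.2 hhalf.2⟩ hhalf hs.2))
        exact le_of_tendsto htg0 hev2
      exact absurd (key (δ/2) hhalf.1) (not_lt.2 hglim)
  -- assemble the bound
  set M : ℝ := (max ‖u₀‖ ‖uinf‖ + R)/2 with hMdef
  have hmaxlt : max ‖u₀‖ ‖uinf‖ < R := max_lt hu₀lt huinf
  have hM : M < R := by simp only [hMdef]; linarith
  have hM₀ : ‖u₀‖ < M := by
    have := le_max_left ‖u₀‖ ‖uinf‖; simp only [hMdef]; linarith
  have hMinf : ‖uinf‖ < M := by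
    have := le_max_right ‖u₀‖ ‖uinf‖; simp only [hMdef]; linarith
  have hev0 : ∀ᶠ r in 𝓝[>] (0:ℝ), ‖u r‖ ≤ M :=
    hu0.norm.eventually_mem (Iic_mem_nhds hM₀)
  obtain ⟨a, ha, hsub0⟩ := mem_nhdsGT_iff_exists_Ioo_subset.1 hev0
  have ha0 : (0:ℝ) < a := mem_Ioi.1 ha
  have hevtop : ∀ᶠ r in atTop, ‖u r‖ ≤ M := hlim.norm.eventually_mem (Iic_mem_nhds hMinf)
  obtain ⟨b, hb⟩ := eventually_atTop.1 hevtop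
  set b' : ℝ := max a b with hb'def
  have hab' : a/2 ≤ b' := le_trans (by linarith) (le_max_left a b)
  have hcont' : ContinuousOn (fun r => ‖u r‖) (Icc (a/2) b') := fun x hx =>
    (((hu x (lt_of_lt_of_le (by linarith) hx.1)).continuousAt).norm).continuousWithinAt
  obtain ⟨rm, hrm, hmaxon⟩ := isCompact_Icc.exists_isMaxOn ⟨a/2, le_refl _, hab'⟩ hcont'
  have hrm0 : 0 < rm := lt_of_lt_of_le (by linarith) hrm.1
  have hrmR : ‖u rm‖ < R := lt_of_pow_lt_pow_left₀ 2 (le_of_lt hR) (key rm hrm0)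
  refine ⟨max M ‖u rm‖, max_lt hM hrmR, ?_⟩
  intro r hr
  by_cases h1 : r < a
  · exact le_trans (hsub0 ⟨hr, h1⟩) (le_max_left _ _)
  · push_neg at h1
    by_cases h2 : r ≤ b'
    · exact le_trans (hmaxon ⟨by linarith, h2⟩) (le_max_right _ _)
    · push_neg at h2
      exact le_trans (hb r (le_trans (le_max_right a b) (le_of_lt h2)))
        (le_max_left _ _)
end

section
/- Let d ≥ 2 be an integer, let V : ℝⁿ → ℝ be of class C², let I ⊆ (0,∞) be a nonempty open interval, and let u : (0,∞) → ℝⁿ be a radial profile for V. Suppose (φ, ψ) : I → ℝⁿ × ℝⁿ is a C¹ solution of the adjoint linearized system along u, and that ψ(r) = u'(r) for every r ∈ I. Then for every r ∈ I one has r·u''(r) = u'(r), or equivalently d·u'(r) = r·∇V(u(r)). -/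
open Set Filter

private lemma gradient_contDiff_aux {n : ℕ} (V : EuclideanSpace ℝ (Fin n) → ℝ)
    (hV : ContDiff ℝ 2 V) : ContDiff ℝ 1 (gradient V) := by
  have h1 : ContDiff ℝ 1 (fderiv ℝ V) := hV.fderiv_right (by norm_num)
  have h2 : gradient V = fun x => (InnerProductSpace.toDual ℝ _).symm (fderiv ℝ V x) := rfl
  rw [h2]
  exact (InnerProductSpace.toDual ℝ _).symm.contDiff.comp h1

/-- Let `u` be a radial profile for a `C²` potential `V` (with
first and second derivatives `u'`, `u''`), and let `(φ, ψ)` be a `C¹` solution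
on a nonempty open interval `I ⊆ (0,∞)` of the adjoint linearized system
`φ' = −D²V(u)·ψ`, `ψ' = −φ + ((d−1)/r)·ψ` along `u`. If `ψ = u'` on `I`, then
for every `r ∈ I` one has `r·u''(r) = u'(r)`, or equivalently
`d·u'(r) = r·∇V(u(r))`. -/
theorem adjoint_solution_collinear_case_ODE
    {n : ℕ} (hn : 1 ≤ n) {d : ℕ} (hd : 2 ≤ d)
    (V : EuclideanSpace ℝ (Fin n) → ℝ) (hV : ContDiff ℝ 2 V)
    (I : Set ℝ) (hI : ∃ a b : ℝ, a < b ∧ I = Ioo a b) (hIpos : I ⊆ Ioi 0)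
    (u u' u'' : ℝ → EuclideanSpace ℝ (Fin n))
    (hu : ∀ r, 0 < r → HasDerivAt u (u' r) r)
    (hu' : ∀ r, 0 < r → HasDerivAt u' (u'' r) r)
    (heq : ∀ r, 0 < r →
      u'' r = -(((d : ℝ) - 1) / r) • u' r + gradient V (u r))
    (φ ψ : ℝ → EuclideanSpace ℝ (Fin n))
    (hφ : ∀ r ∈ I, HasDerivAt φ (-(fderiv ℝ (gradient V) (u r) (ψ r))) r)
    (hψ : ∀ r ∈ I, HasDerivAt ψ (-(φ r) + (((d : ℝ) - 1) / r) • ψ r) r)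
    (hψu : ∀ r ∈ I, ψ r = u' r) :
    ∀ r ∈ I, r • u'' r = u' r ∧ (d : ℝ) • u' r = r • gradient V (u r) := by
  obtain ⟨a, b, hab, rfl⟩ := hI
  have hIopen : IsOpen (Ioo a b) := isOpen_Ioo
  have hgradC1 : ContDiff ℝ 1 (gradient V) := gradient_contDiff_aux V hV
  -- on I, `u''` satisfies the ψ equation
  have hps : ∀ s ∈ Ioo a b, u'' s = -(φ s) + (((d : ℝ) - 1) / s) • u' s := by
    intro s hs
    have hspos : (0:ℝ) < s := hIpos hs
    have hev : u' =ᶠ[nhds s] ψ := by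
      filter_upwards [hIopen.mem_nhds hs] with t ht
      exact (hψu t ht).symm
    have h1 : HasDerivAt u' (-(φ s) + (((d : ℝ) - 1) / s) • ψ s) s :=
      (hψ s hs).congr_of_eventuallyEq hev
    rw [hψu s hs] at h1
    exact (hu' s hspos).unique h1
  -- explicit formula for φ on I
  have hφval : ∀ s ∈ Ioo a b,
      φ s = (2 * (((d : ℝ) - 1) / s)) • u' s - gradient V (u s) := by
    intro s hs
    have hspos : (0:ℝ) < s := hIpos hs
    have h1 := hps s hs
    have h2 := heq s hspos
    have h3 : φ s = (((d : ℝ) - 1) / s) • u' s - u'' s := by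
      rw [h1]; abel
    rw [h3, h2]
    module
  intro r hr
  have hrpos : (0:ℝ) < r := hIpos hr
  -- derivative of the RHS of the formula for φ
  have hc : HasDerivAt (fun s : ℝ => 2 * (((d : ℝ) - 1) / s))
      (-(2 * ((d : ℝ) - 1) / r ^ 2)) r := by
    have h := (hasDerivAt_inv hrpos.ne').const_mul (2 * ((d : ℝ) - 1))
    have hfun : (fun s : ℝ => 2 * (((d : ℝ) - 1) / s)) = fun s => 2 * ((d : ℝ) - 1) * s⁻¹ := by
      funext s; ring
    rw [hfun]
    convert h using 1
    · rfl
    · rfl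
    · ring
  have hsmul : HasDerivAt (fun s => (2 * (((d : ℝ) - 1) / s)) • u' s)
      ((2 * (((d : ℝ) - 1) / r)) • u'' r + (-(2 * ((d : ℝ) - 1) / r ^ 2)) • u' r) r :=
    hc.smul (hu' r hrpos)
  have hgrad : HasDerivAt (fun s => gradient V (u s))
      (fderiv ℝ (gradient V) (u r) (u' r)) r :=
    ((hgradC1.differentiable one_ne_zero (u r)).hasFDerivAt).comp_hasDerivAt r (hu r hrpos)
  have hg : HasDerivAt (fun s => (2 * (((d : ℝ) - 1) / s)) • u' s - gradient V (u s))
      ((2 * (((d : ℝ) - 1) / r)) • u'' r + (-(2 * ((d : ℝ) - 1) / r ^ 2)) • u' r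
        - fderiv ℝ (gradient V) (u r) (u' r)) r := hsmul.sub hgrad
  have hev2 : φ =ᶠ[nhds r] fun s => (2 * (((d : ℝ) - 1) / s)) • u' s - gradient V (u s) := by
    filter_upwards [hIopen.mem_nhds hr] with t ht
    exact hφval t ht
  have hφ2 : HasDerivAt φ
      ((2 * (((d : ℝ) - 1) / r)) • u'' r + (-(2 * ((d : ℝ) - 1) / r ^ 2)) • u' r
        - fderiv ℝ (gradient V) (u r) (u' r)) r := hg.congr_of_eventuallyEq hev2
  have huniq := (hφ r hr).unique hφ2
  rw [hψu r hr] at huniq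
  -- cancel the Hessian term
  have hkey : (2 * (((d : ℝ) - 1) / r)) • u'' r = (2 * ((d : ℝ) - 1) / r ^ 2) • u' r := by
    have h2 : (2 * (((d : ℝ) - 1) / r)) • u'' r + (-(2 * ((d : ℝ) - 1) / r ^ 2)) • u' r
        = 0 := by
      have := congrArg (fun x => x + fderiv ℝ (gradient V) (u r) (u' r)) huniq
      simp only [neg_add_cancel, sub_add_cancel] at this
      exact this.symm
    rw [add_eq_zero_iff_eq_neg] at h2
    rw [h2]; module
  -- deduce r • u'' r = u' r
  have hdpos : (0:ℝ) < (d : ℝ) - 1 := by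
    have : (2:ℝ) ≤ (d : ℝ) := by exact_mod_cast hd
    linarith
  have hk : (2 * (((d : ℝ) - 1) / r)) ≠ 0 := by positivity
  have hfirst : r • u'' r = u' r := by
    apply smul_right_injective (EuclideanSpace ℝ (Fin n)) hk
    show (2 * (((d : ℝ) - 1) / r)) • (r • u'' r) = (2 * (((d : ℝ) - 1) / r)) • u' r
    calc (2 * (((d : ℝ) - 1) / r)) • (r • u'' r)
        = r • ((2 * (((d : ℝ) - 1) / r)) • u'' r) := smul_comm _ _ _
      _ = r • ((2 * ((d : ℝ) - 1) / r ^ 2) • u' r) := by rw [hkey]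
      _ = (r * (2 * ((d : ℝ) - 1) / r ^ 2)) • u' r := smul_smul _ _ _
      _ = (2 * (((d : ℝ) - 1) / r)) • u' r := by
          congr 1
          field_simp
  refine ⟨hfirst, ?_⟩
  -- second identity
  have h3 : r • u'' r = (-(((d : ℝ) - 1))) • u' r + r • gradient V (u r) := by
    rw [heq r hrpos, smul_add, smul_smul]
    congr 2
    field_simp
  have h5 : u' r = (-(((d : ℝ) - 1))) • u' r + r • gradient V (u r) := hfirst.symm.trans h3
  calc (d : ℝ) • u' r = u' r + ((d : ℝ) - 1) • u' r := by module
    _ = ((-(((d : ℝ) - 1))) • u' r + r • gradient V (u r)) + ((d : ℝ) - 1) • u' r := by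
        rw [← h5]
    _ = r • gradient V (u r) := by module
end

section
/- Let d ≥ 2 be an integer, let V : ℝⁿ → ℝ be of class C², and let u : (0,∞) → ℝⁿ be a radial profile for V such that u'(r) → 0 as r → 0⁺. Then there exists an even function v : ℝ → ℝⁿ of class C³ such that v(r) = u(r) for every r > 0, v satisfies v''(r) = −((d−1)/r)·v'(r) + ∇V(v(r)) for every r ≠ 0, and at the origin v'(0) = 0 and v''(0) = ∇V(v(0))/d. -/
open Set Filter

-- Helper: bound on ∫ s^k • g s over [0,t]
lemma aux_pow_smul_integral_bound {E : Type*} [NormedAddCommGroup E] [NormedSpace ℝ E]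
    (k : ℕ) (g : ℝ → E) (hg : IntervalIntegrable (fun s => s ^ k • g s) MeasureTheory.volume 0 t)
    (ht : 0 < t) (C : ℝ) (hC : ∀ s ∈ Set.Ioc (0:ℝ) t, ‖g s‖ ≤ C) :
    ‖∫ s in (0:ℝ)..t, s ^ k • g s‖ ≤ C * t ^ (k + 1) := by
  have h := intervalIntegral.norm_integral_le_of_norm_le_const (C := t ^ k * C)
    (f := fun s => s ^ k • g s) (a := 0) (b := t) ?_
  · calc ‖∫ s in (0:ℝ)..t, s ^ k • g s‖ ≤ t ^ k * C * |t - 0| := h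
      _ = C * t ^ (k+1) := by rw [sub_zero, abs_of_pos ht]; ring
  · intro x hx
    rw [Set.uIoc_of_le ht.le] at hx
    rw [norm_smul, norm_pow, Real.norm_eq_abs, abs_of_pos hx.1]
    have h1 : x ^ k ≤ t ^ k := pow_le_pow_left₀ hx.1.le hx.2 k
    have h2 : ‖g x‖ ≤ C := hC x hx
    have h3 : (0:ℝ) ≤ ‖g x‖ := norm_nonneg _
    nlinarith [pow_pos hx.1 k]

set_option maxHeartbeats 2000000 in
/-- Let `u` be a radial profile for a `C²` potential `V` with
`u'(r) → 0` as `r → 0⁺`. Then `u` is the restriction to `(0,∞)` of an even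
function `v : ℝ → ℝⁿ` of class `C³` which satisfies the profile equation for
every `r ≠ 0`, and at the origin `v'(0) = 0` and `v''(0) = ∇V(v(0))/d`. -/
theorem radial_profile_even_C3_extension
    {n : ℕ} (hn : 1 ≤ n) {d : ℕ} (hd : 2 ≤ d)
    (V : EuclideanSpace ℝ (Fin n) → ℝ) (hV : ContDiff ℝ 2 V)
    (u u' : ℝ → EuclideanSpace ℝ (Fin n))
    (hu : ∀ r, 0 < r → HasDerivAt u (u' r) r)
    (hu' : ∀ r, 0 < r → HasDerivAt u'
      (-(((d : ℝ) - 1) / r) • u' r + gradient V (u r)) r)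
    (hu'0 : Tendsto u' (nhdsWithin 0 (Ioi 0)) (nhds 0)) :
    ∃ v : ℝ → EuclideanSpace ℝ (Fin n),
      ContDiff ℝ 3 v ∧
      (∀ r : ℝ, v (-r) = v r) ∧
      (∀ r, 0 < r → v r = u r) ∧
      (∀ r : ℝ, r ≠ 0 → deriv (deriv v) r
        = -(((d : ℝ) - 1) / r) • deriv v r + gradient V (v r)) ∧
      deriv v 0 = 0 ∧
      deriv (deriv v) 0 = ((d : ℝ)⁻¹) • gradient V (v 0) := by
  obtain ⟨e, rfl⟩ : ∃ e, d = e + 2 := ⟨d - 2, by omega⟩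
  set d := e + 2 with hdef
  have hdR : (0:ℝ) < (d:ℝ) := by positivity
  -- extended derivative
  set U' : ℝ → EuclideanSpace ℝ (Fin n) := fun t => if 0 < t then u' t else 0 with hU'def
  have hu'contAt : ∀ r, 0 < r → ContinuousAt u' r := fun r hr => (hu' r hr).continuousAt
  have hU'cont : Continuous U' := by
    rw [continuous_iff_continuousAt]
    intro t
    rcases lt_trichotomy t 0 with ht | rfl | ht
    · apply Filter.EventuallyEq.continuousAt (y := 0)
      filter_upwards [Iio_mem_nhds ht] with x hx
      simp [hU'def, not_lt.2 (le_of_lt (mem_Iio.1 hx))]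
    · have h0 : U' 0 = 0 := by simp [hU'def]
      rw [ContinuousAt, h0, Metric.tendsto_nhds]
      intro ε hε
      rw [Metric.tendsto_nhdsWithin_nhds] at hu'0
      obtain ⟨δ, hδ, hδ'⟩ := hu'0 ε hε
      filter_upwards [Metric.ball_mem_nhds 0 hδ] with x hx
      by_cases hxpos : 0 < x
      · have := hδ' hxpos hx
        simpa [hU'def, hxpos] using this
      · simpa [hU'def, hxpos] using hε
    · apply (hu'contAt t ht).congr
      filter_upwards [Ioi_mem_nhds ht] with x hx
      simp [hU'def, mem_Ioi.1 hx]
  have hU'int : ∀ a b : ℝ, IntervalIntegrable U' MeasureTheory.volume a b :=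
    fun a b => hU'cont.intervalIntegrable a b
  -- primitive of U'
  set W : ℝ → EuclideanSpace ℝ (Fin n) := fun x => ∫ t in (0:ℝ)..x, U' t with hWdef
  have hWderiv : ∀ x, HasDerivAt W (U' x) x :=
    fun x => (hU'cont.integral_hasStrictDerivAt 0 x).hasDerivAt
  have hWcont : Continuous W := continuous_iff_continuousAt.2 fun x => (hWderiv x).continuousAt
  set u0 : EuclideanSpace ℝ (Fin n) := u 1 - W 1 with hu0def
  have hurepr : ∀ r, 0 < r → u r = u0 + W r := by
    intro r hr
    have hsub : ∀ x ∈ uIcc r 1, HasDerivAt u (U' x) x := by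
      intro x hx
      have hxpos : 0 < x := lt_of_lt_of_le (lt_min hr one_pos) hx.1
      have : U' x = u' x := by simp [hU'def, hxpos]
      rw [this]; exact hu x hxpos
    have h1 : ∫ x in r..1, U' x = u 1 - u r :=
      intervalIntegral.integral_eq_sub_of_hasDerivAt hsub (hU'int r 1)
    have h2 : W 1 - W r = ∫ x in r..1, U' x :=
      intervalIntegral.integral_interval_sub_left (hU'int 0 1) (hU'int 0 r)
    have h3 : W 1 - W r = u 1 - u r := h2.trans h1
    rw [hu0def, show u 1 - W 1 + W r = u 1 - (W 1 - W r) by abel, h3]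
    abel
  set v : ℝ → EuclideanSpace ℝ (Fin n) := fun r => u0 + W |r| with hvdef
  have hveq : ∀ r, 0 < r → v r = u r := by
    intro r hr; rw [hvdef]; simp only [abs_of_pos hr]; rw [hurepr r hr]
  have hveven : ∀ r, v (-r) = v r := by intro r; simp [hvdef, abs_neg]
  have hvcont : Continuous v := by
    apply continuous_const.add (hWcont.comp continuous_abs)
  -- gradient is C¹
  have hgradC1 : ContDiff ℝ 1 (gradient V) := by
    have h1 : ContDiff ℝ 1 (fderiv ℝ V) := hV.fderiv_right (by norm_num)
    exact (InnerProductSpace.toDual ℝ (EuclideanSpace ℝ (Fin n))).symm.contDiff.comp h1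
  have hgradcont : Continuous (gradient V) := hgradC1.continuous
  set F : ℝ → EuclideanSpace ℝ (Fin n) := fun r => gradient V (v r) with hFdef
  have hFcont : Continuous F := hgradcont.comp hvcont
  set P : ℝ → EuclideanSpace ℝ (Fin n) := fun r => ∫ s in (0:ℝ)..r, s ^ (e+1) • F s with hPdef
  have hPig : Continuous fun s : ℝ => s ^ (e+1) • F s := (continuous_pow _).smul hFcont
  have hPderiv : ∀ r, HasDerivAt P (r ^ (e+1) • F r) r :=
    fun r => (hPig.integral_hasStrictDerivAt 0 r).hasDerivAt
  have hPcont : Continuous P := continuous_iff_continuousAt.2 fun x => (hPderiv x).continuousAt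
  have hP0 : P 0 = 0 := intervalIntegral.integral_same
  have hcast : (d:ℝ) - 1 = (e:ℝ) + 1 := by push_cast [hdef]; ring
  have hphi : ∀ x : ℝ, 0 < x →
      HasDerivAt (fun r : ℝ => r ^ (e+1) • u' r) (x ^ (e+1) • F x) x := by
    intro x hx
    have h1 : HasDerivAt (fun r : ℝ => r ^ (e+1)) (((e:ℝ)+1) * x ^ e) x := by
      simpa using hasDerivAt_pow (e+1) x
    have h2 := h1.smul (hu' x hx)
    refine h2.congr_deriv ?_
    have hgx : F x = gradient V (u x) := by
      show gradient V (v x) = gradient V (u x); rw [hveq x hx]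
    have hx' : x ^ (e+1) • (-(((d:ℝ)-1)/x) • u' x) = (-(((e:ℝ)+1) * x ^ e)) • u' x := by
      rw [smul_smul]
      congr 1
      rw [hcast]
      field_simp
      ring
    rw [smul_add, hx', hgx]
    module
  have hkey : ∀ r : ℝ, 0 < r → r ^ (e+1) • u' r = P r := by
    intro b hb
    have hstep : ∀ a : ℝ, 0 < a →
        a ^ (e+1) • u' a - P a = b ^ (e+1) • u' b - P b := by
      intro a ha
      have hder : ∀ x ∈ uIcc a b, HasDerivAt (fun r : ℝ => r ^ (e+1) • u' r) (x ^ (e+1) • F x) x :=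
        fun x hx => hphi x (lt_of_lt_of_le (lt_min ha hb) hx.1)
      have hftc := intervalIntegral.integral_eq_sub_of_hasDerivAt hder (hPig.intervalIntegrable a b)
      have hPP : P b - P a = ∫ x in a..b, x ^ (e+1) • F x :=
        intervalIntegral.integral_interval_sub_left (hPig.intervalIntegrable 0 b)
          (hPig.intervalIntegrable 0 a)
      rw [hftc] at hPP
      rw [show b ^ (e+1) • u' b - P b = a ^ (e+1) • u' a + (P b - P a) - P b by rw [hPP]; abel]
      abel
    have hl1 : Tendsto (fun a : ℝ => a ^ (e+1) • u' a - P a) (nhdsWithin 0 (Ioi 0))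
        (nhds (b ^ (e+1) • u' b - P b)) := by
      apply Tendsto.congr' _ tendsto_const_nhds
      filter_upwards [self_mem_nhdsWithin] with a ha
      exact (hstep a ha).symm
    have hl2 : Tendsto (fun a : ℝ => a ^ (e+1) • u' a - P a) (nhdsWithin 0 (Ioi 0)) (nhds 0) := by
      have hpow : Tendsto (fun a : ℝ => a ^ (e+1)) (nhdsWithin 0 (Ioi 0)) (nhds 0) := by
        have := ((continuous_pow (e+1)).tendsto (0:ℝ)).mono_left
          (nhdsWithin_le_nhds (s := Ioi (0:ℝ)))
        simpa using this
      have hsmul := hpow.smul hu'0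
      rw [zero_smul] at hsmul
      have hPt : Tendsto (fun a : ℝ => P a) (nhdsWithin 0 (Ioi 0)) (nhds 0) := by
        have := (hPcont.tendsto 0).mono_left (nhdsWithin_le_nhds (s := Ioi (0:ℝ)))
        rwa [hP0] at this
      simpa using hsmul.sub hPt
    have := tendsto_nhds_unique hl1 hl2
    rw [sub_eq_zero] at this
    exact this
  set G : ℝ → EuclideanSpace ℝ (Fin n) :=
    fun r => if r = 0 then ((d:ℝ))⁻¹ • F 0 else (|r| ^ (e+2))⁻¹ • P |r| with hGdef
  have hG0 : G 0 = ((d:ℝ))⁻¹ • F 0 := by simp [hGdef]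
  have hGne : ∀ r : ℝ, r ≠ 0 → G r = (|r| ^ (e+2))⁻¹ • P |r| := by
    intro r hr; simp [hGdef, hr]
  have hGpos : ∀ r : ℝ, 0 < r → G r = (r ^ (e+2))⁻¹ • P r := by
    intro r hr; rw [hGne r hr.ne', abs_of_pos hr]
  have hGeven : ∀ r, G (-r) = G r := by
    intro r
    by_cases hr : r = 0
    · rw [hr, neg_zero]
    · rw [hGne r hr, hGne (-r) (by simpa using hr), abs_neg]
  have hGu' : ∀ r : ℝ, 0 < r → u' r = r • G r := by
    intro r hr
    have hrne : r ≠ 0 := hr.ne'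
    have h1 : u' r = (r ^ (e+1))⁻¹ • P r := by
      rw [← hkey r hr, inv_smul_smul₀ (pow_ne_zero _ hrne)]
    rw [h1, hGpos r hr, smul_smul]
    congr 1
    rw [pow_succ]
    field_simp
    ring
  have hGbound : ∀ r : ℝ, r ≠ 0 → ∀ C : ℝ,
      (∀ s ∈ Ioc (0:ℝ) |r|, ‖F s - F 0‖ ≤ C) → ‖G r - G 0‖ ≤ C := by
    intro r hr C hC
    have ht : 0 < |r| := abs_pos.2 hr
    set t := |r| with htdef
    have htne : t ≠ 0 := ht.ne'
    have hgsub : Continuous fun s : ℝ => s ^ (e+1) • (F s - F 0) :=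
      (continuous_pow _).smul (hFcont.sub continuous_const)
    have hintsub : ∫ s in (0:ℝ)..t, s^(e+1) • (F s - F 0)
        = P t - ((t^(e+2))/((e:ℝ)+2)) • F 0 := by
      have h1 : ∫ s in (0:ℝ)..t, s^(e+1) • (F s - F 0)
          = (∫ s in (0:ℝ)..t, s^(e+1) • F s) - ∫ s in (0:ℝ)..t, s^(e+1) • F 0 := by
        rw [← intervalIntegral.integral_sub (g := fun s : ℝ => s^(e+1) • F 0) (hPig.intervalIntegrable 0 t)
          (((continuous_pow _).smul continuous_const : Continuous fun s : ℝ => s^(e+1) • F 0).intervalIntegrable 0 t)]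
        congr 1
        ext s
        rw [smul_sub]
      rw [h1, intervalIntegral.integral_smul_const, integral_pow]
      rw [show e + 1 + 1 = e + 2 from rfl]
      congr 2
      push_cast
      ring
    have hbnd : ‖∫ s in (0:ℝ)..t, s^(e+1) • (F s - F 0)‖ ≤ C * t^(e+2) :=
      aux_pow_smul_integral_bound (e+1) _ (hgsub.intervalIntegrable 0 t) ht C hC
    have hid : G r - G 0 = (t^(e+2))⁻¹ • (∫ s in (0:ℝ)..t, s^(e+1) • (F s - F 0)) := by
      rw [hintsub, smul_sub, hGne r hr, ← htdef, hG0, smul_smul]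
      congr 2
      rw [hdef]
      field_simp
      push_cast; ring
    rw [hid, norm_smul, norm_inv, norm_pow, Real.norm_eq_abs, abs_abs, ← htdef]
    calc (t^(e+2))⁻¹ * ‖∫ s in (0:ℝ)..t, s^(e+1) • (F s - F 0)‖
        ≤ (t^(e+2))⁻¹ * (C * t^(e+2)) := by
          apply mul_le_mul_of_nonneg_left hbnd (by positivity)
      _ = C := by field_simp
  have hGcont : Continuous G := by
    rw [continuous_iff_continuousAt]
    intro r
    by_cases hr : r = 0
    · subst hr
      rw [ContinuousAt, Metric.tendsto_nhds]
      intro ε hε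
      obtain ⟨δ, hδ, hδ'⟩ := Metric.continuousAt_iff.1 hFcont.continuousAt (ε/2) (by positivity)
      filter_upwards [Metric.ball_mem_nhds (0:ℝ) hδ] with x hx
      by_cases hx0 : x = 0
      · simpa [hx0] using hε
      · have : ‖G x - G 0‖ ≤ ε/2 := by
          apply hGbound x hx0
          intro s hs
          have hsd : dist s 0 < δ := by
            rw [Real.dist_eq, sub_zero, abs_of_pos hs.1]
            calc s ≤ |x| := hs.2
              _ < δ := by simpa [Real.dist_eq] using hx
          exact (le_of_lt (hδ' hsd))
        rw [dist_eq_norm]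
        linarith
    · have hopen : {x : ℝ | x ≠ 0} ∈ nhds r := isOpen_ne.mem_nhds hr
      apply ContinuousAt.congr _ (Filter.eventuallyEq_of_mem hopen fun x hx => (hGne x hx).symm)
      exact (((continuous_abs.pow _).continuousAt).inv₀
        (pow_ne_zero _ (abs_pos.2 hr).ne')).smul (hPcont.comp continuous_abs).continuousAt
  set v1 : ℝ → EuclideanSpace ℝ (Fin n) := fun r => r • G r with hv1def
  have hv1cont : Continuous v1 := continuous_id.smul hGcont
  have hv10 : v1 0 = 0 := zero_smul _ _
  have hv1odd : ∀ t, v1 (-t) = - v1 t := by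
    intro t
    show (-t) • G (-t) = -(t • G t)
    rw [hGeven t, neg_smul]
  have hv1u' : ∀ r : ℝ, 0 < r → v1 r = u' r := fun r hr => (hGu' r hr).symm
  have hvrepr : v = fun r => u0 + ∫ t in (0:ℝ)..r, v1 t := by
    have hnn : ∀ r : ℝ, 0 ≤ r → v r = u0 + ∫ t in (0:ℝ)..r, v1 t := by
      intro r hr
      show u0 + W |r| = _
      rw [abs_of_nonneg hr]
      congr 1
      apply intervalIntegral.integral_congr
      intro t htm
      rw [uIcc_of_le hr] at htm
      rcases eq_or_lt_of_le htm.1 with h | h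
      · rw [← h]; simp [hU'def, hv10]
      · show U' t = v1 t
        rw [hv1u' t h]
        simp [hU'def, h]
    funext r
    rcases le_or_gt 0 r with hr | hr
    · exact hnn r hr
    · have h1 : v r = u0 + ∫ t in (0:ℝ)..(-r), v1 t := by
        rw [← hveven r]; exact hnn (-r) (by linarith)
      rw [h1]
      congr 1
      have h2 : ∫ x in (0:ℝ)..r, v1 (-x) = ∫ x in (-r)..(0:ℝ), v1 x := by
        rw [intervalIntegral.integral_comp_neg]
        norm_num
      have h3 : ∫ x in (0:ℝ)..r, v1 (-x) = -∫ x in (0:ℝ)..r, v1 x := by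
        rw [intervalIntegral.integral_congr (g := fun x => -(v1 x)) (fun x _ => hv1odd x),
          intervalIntegral.integral_neg]
      have h4 : ∫ x in (-r)..(0:ℝ), v1 x = -∫ x in (0:ℝ)..(-r), v1 x :=
        intervalIntegral.integral_symm 0 (-r)
      rw [h3, h4] at h2
      exact (neg_injective h2).symm
  have hvderiv : ∀ r, HasDerivAt v (v1 r) r := by
    intro r
    rw [hvrepr]
    exact ((hv1cont.integral_hasStrictDerivAt 0 r).hasDerivAt).const_add u0
  have hderivv : deriv v = v1 := funext fun r => (hvderiv r).deriv
  set H : ℝ → EuclideanSpace ℝ (Fin n) := fun r => F r - ((d:ℝ)-1) • G r with hHdef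
  have hHcont : Continuous H := hFcont.sub (hGcont.const_smul ((d:ℝ)-1) : Continuous fun r => ((d:ℝ)-1) • G r)
  have hH0 : H 0 = ((d:ℝ))⁻¹ • F 0 := by
    show F 0 - ((d:ℝ)-1) • G 0 = _
    rw [hG0, smul_smul]
    have h1 : F 0 - (((d:ℝ)-1) * (d:ℝ)⁻¹) • F 0 = (1 - ((d:ℝ)-1) * (d:ℝ)⁻¹) • F 0 := by
      rw [sub_smul, one_smul]
    rw [h1]
    congr 1
    field_simp
    ring
  have hHeven : ∀ r, H (-r) = H r := by
    intro r
    show gradient V (v (-r)) - ((d:ℝ)-1) • G (-r) = gradient V (v r) - ((d:ℝ)-1) • G r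
    rw [hveven r, hGeven r]
  have hv1posderiv : ∀ r : ℝ, 0 < r → HasDerivAt v1 (H r) r := by
    intro r hr
    have hrne : r ≠ 0 := hr.ne'
    have h1 : HasDerivAt (fun x : ℝ => x ^ (e+1)) (((e:ℝ)+1) * r ^ e) r := by
      simpa using hasDerivAt_pow (e+1) r
    have h2 := h1.inv (pow_ne_zero _ hrne)
    have h3 := h2.smul (hPderiv r)
    have hev : (fun x : ℝ => (x ^ (e+1))⁻¹ • P x) =ᶠ[nhds r] v1 := by
      filter_upwards [Ioi_mem_nhds hr] with x hx
      have hx0 : (0:ℝ) < x := hx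
      show (x ^ (e+1))⁻¹ • P x = x • G x
      rw [hGpos x hx0, smul_smul]
      congr 1
      rw [pow_succ]
      field_simp
      ring
    apply HasDerivAt.congr_of_eventuallyEq _ hev.symm
    refine h3.congr_deriv (Eq.symm ?_)
    simp only [Pi.inv_apply]
    rw [inv_smul_smul₀ (pow_ne_zero _ hrne)]
    show F r - ((d:ℝ)-1) • G r = _
    rw [hGpos r hr, smul_smul]
    have hsc : (((d:ℝ)-1) * (r^(e+2))⁻¹) = -(-(((e:ℝ)+1) * r ^ e) / (r ^ (e+1)) ^ 2) := by
      rw [hcast]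
      field_simp
      ring
    rw [hsc]
    module
  have hv1deriv : ∀ r : ℝ, HasDerivAt v1 (H r) r := by
    intro r
    rcases lt_trichotomy r 0 with hr | rfl | hr
    · have h := hv1posderiv (-r) (by linarith)
      have h2 : HasDerivAt (fun x : ℝ => v1 (-x)) ((-1 : ℝ) • H (-r)) r :=
        h.scomp r (hasDerivAt_neg r)
      have h3 := h2.neg
      have h4 : HasDerivAt (fun x : ℝ => -(v1 (-x))) (H r) r := by
        rw [← hHeven r]
        refine h3.congr_deriv (Eq.symm ?_)
        module
      apply h4.congr_of_eventuallyEq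
      apply Filter.Eventually.of_forall
      intro x
      show v1 x = -(v1 (-x))
      rw [hv1odd x, neg_neg]
    · rw [hasDerivAt_iff_tendsto_slope]
      have hGt : Tendsto G (nhdsWithin 0 {(0:ℝ)}ᶜ) (nhds (H 0)) := by
        have := (hGcont.tendsto 0).mono_left (nhdsWithin_le_nhds (s := {(0:ℝ)}ᶜ))
        rwa [hG0, ← hH0] at this
      apply hGt.congr'
      filter_upwards [self_mem_nhdsWithin] with x hx
      have hxne : x ≠ 0 := hx
      rw [slope_def_module, sub_zero, hv10, sub_zero]
      show G x = x⁻¹ • (x • G x)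
      rw [inv_smul_smul₀ hxne]
    · exact hv1posderiv r hr
  have hderivv1 : deriv v1 = H := funext fun r => (hv1deriv r).deriv
  have hvC1 : ContDiff ℝ 1 v := contDiff_one_iff_deriv.2
    ⟨fun r => (hvderiv r).differentiableAt, by rw [hderivv]; exact hv1cont⟩
  have hgraddiff : Differentiable ℝ (gradient V) := hgradC1.differentiable one_ne_zero
  have hFderiv : ∀ r, HasDerivAt F ((fderiv ℝ (gradient V) (v r)) (v1 r)) r := by
    intro r
    exact (hgraddiff (v r)).hasFDerivAt.comp_hasDerivAt r (hvderiv r)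
  have hFd0 : HasDerivAt F 0 0 := by
    have := hFderiv 0
    rwa [hv10, map_zero] at this
  have hFsmall : ∀ ε : ℝ, 0 < ε → ∀ᶠ s in nhds (0:ℝ), ‖F s - F 0‖ ≤ ε * |s| := by
    intro ε hε
    rw [hasDerivAt_iff_isLittleO] at hFd0
    filter_upwards [hFd0.def hε] with x hx
    simpa using hx
  have hFeven : ∀ r, F (-r) = F r := by
    intro r
    show gradient V (v (-r)) = gradient V (v r)
    rw [hveven r]
  set K0 : ℝ → EuclideanSpace ℝ (Fin n) :=
    fun r => if r = 0 then 0 else r⁻¹ • (F r - (d:ℝ) • G r) with hK0def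
  have hK00 : K0 0 = 0 := by simp [hK0def]
  have hK0ne : ∀ r : ℝ, r ≠ 0 → K0 r = r⁻¹ • (F r - (d:ℝ) • G r) := by
    intro r hr; simp [hK0def, hr]
  have hK0odd : ∀ t, K0 (-t) = -K0 t := by
    intro t
    by_cases ht : t = 0
    · rw [ht]; simp [hK00]
    · rw [hK0ne t ht, hK0ne (-t) (by simpa using ht), hFeven, hGeven]
      rw [← neg_smul]
      congr 1
      field_simp
  have hFG0 : F 0 - (d:ℝ) • G 0 = 0 := by
    rw [hG0, smul_smul, mul_inv_cancel₀ hdR.ne', one_smul, sub_self]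
  have hGslope : ∀ ε : ℝ, 0 < ε → ∀ᶠ r in nhds (0:ℝ), ‖G r - G 0‖ ≤ ε * |r| := by
    intro ε hε
    obtain ⟨δ, hδ, hδ'⟩ := Metric.eventually_nhds_iff.1 (hFsmall ε hε)
    filter_upwards [Metric.ball_mem_nhds (0:ℝ) hδ] with r hrball
    by_cases hr : r = 0
    · simp [hr]
    · apply hGbound r hr
      intro s hs
      have hsδ : dist s 0 < δ := by
        rw [Real.dist_eq, sub_zero, abs_of_pos hs.1]
        calc s ≤ |r| := hs.2
          _ < δ := by simpa [Real.dist_eq] using hrball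
      calc ‖F s - F 0‖ ≤ ε * |s| := hδ' hsδ
        _ ≤ ε * |r| := by
            apply mul_le_mul_of_nonneg_left _ hε.le
            rw [abs_of_pos hs.1]; exact hs.2
  have hGposderiv : ∀ r : ℝ, 0 < r → HasDerivAt G (K0 r) r := by
    intro r hr
    have hrne : r ≠ 0 := hr.ne'
    have h1 : HasDerivAt (fun x : ℝ => x ^ (e+2)) (((e:ℝ)+2) * r ^ (e+1)) r := by
      simpa using hasDerivAt_pow (e+2) r
    have h2 := (h1.inv (pow_ne_zero _ hrne)).smul (hPderiv r)
    have hev : (fun x : ℝ => (x ^ (e+2))⁻¹ • P x) =ᶠ[nhds r] G := by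
      filter_upwards [Ioi_mem_nhds hr] with x hx
      exact (hGpos x hx).symm
    apply HasDerivAt.congr_of_eventuallyEq _ hev.symm
    refine h2.congr_deriv (Eq.symm ?_)
    simp only [Pi.inv_apply]
    rw [hK0ne r hrne, hGpos r hr, smul_sub, smul_smul, smul_smul, smul_smul]
    have hs1 : (r^(e+2))⁻¹ * r^(e+1) = r⁻¹ := by
      rw [pow_succ]
      field_simp
    have hs2 : r⁻¹ * (d:ℝ) * (r^(e+2))⁻¹ = -(-(((e:ℝ)+2) * r^(e+1)) / (r^(e+2))^2) := by
      rw [hdef]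
      push_cast
      field_simp
      ring
    rw [hs1, hs2]
    module
  have hGderiv : ∀ r : ℝ, HasDerivAt G (K0 r) r := by
    intro r
    rcases lt_trichotomy r 0 with hr | rfl | hr
    · have h := hGposderiv (-r) (by linarith)
      have h2 : HasDerivAt (fun x : ℝ => G (-x)) ((-1 : ℝ) • K0 (-r)) r :=
        h.scomp r (hasDerivAt_neg r)
      have h3 : HasDerivAt (fun x : ℝ => G (-x)) (K0 r) r := by
        convert h2 using 1
        rw [hK0odd r]
        module
      apply h3.congr_of_eventuallyEq
      exact Filter.Eventually.of_forall fun x => (hGeven x).symm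
    · rw [hK00, hasDerivAt_iff_tendsto_slope]
      rw [NormedAddCommGroup.tendsto_nhds_zero]
      intro ε hε
      have hhalf : (0:ℝ) < ε/2 := by positivity
      apply eventually_nhdsWithin_of_eventually_nhds
      filter_upwards [hGslope (ε/2) hhalf] with x hx
      by_cases hx0 : x = 0
      · simp [hx0, slope_def_module, hε]
      · rw [slope_def_module, sub_zero, norm_smul, norm_inv, Real.norm_eq_abs]
        have h1 : |x|⁻¹ * ‖G x - G 0‖ ≤ |x|⁻¹ * (ε/2 * |x|) :=
          mul_le_mul_of_nonneg_left hx (by positivity)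
        have h2 : |x|⁻¹ * (ε/2 * |x|) = ε/2 := by
          field_simp
        calc |x|⁻¹ * ‖G x - G 0‖ ≤ ε/2 := by rw [← h2]; exact h1
          _ < ε := by linarith
    · exact hGposderiv r hr
  have hK0cont : Continuous K0 := by
    rw [continuous_iff_continuousAt]
    intro r
    by_cases hr : r = 0
    · subst hr
      rw [ContinuousAt, hK00, NormedAddCommGroup.tendsto_nhds_zero]
      intro ε hε
      have hε' : (0:ℝ) < ε / (2 * ((d:ℝ) + 1)) := by positivity
      filter_upwards [hFsmall _ hε', hGslope _ hε'] with x hF hG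
      by_cases hx0 : x = 0
      · rw [hx0, hK00]; simpa using hε
      · rw [hK0ne x hx0]
        have hid : F x - (d:ℝ) • G x = (F x - F 0) - (d:ℝ) • (G x - G 0) := by
          rw [smul_sub]
          rw [show F x - F 0 - ((d:ℝ) • G x - (d:ℝ) • G 0) =
            (F x - (d:ℝ) • G x) - (F 0 - (d:ℝ) • G 0) by abel, hFG0]
          abel
        rw [hid, norm_smul, norm_inv, Real.norm_eq_abs]
        have hxpos : (0:ℝ) < |x| := abs_pos.2 hx0
        have h3 : |x|⁻¹ * ‖F x - F 0 - (d:ℝ) • (G x - G 0)‖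
            ≤ |x|⁻¹ * (((d:ℝ)+1) * (ε / (2 * ((d:ℝ) + 1)) * |x|)) := by
          apply mul_le_mul_of_nonneg_left _ (by positivity)
          calc ‖F x - F 0 - (d:ℝ) • (G x - G 0)‖
              ≤ ‖F x - F 0‖ + ‖(d:ℝ) • (G x - G 0)‖ := norm_sub_le _ _
            _ ≤ ε / (2 * ((d:ℝ) + 1)) * |x| + (d:ℝ) * (ε / (2 * ((d:ℝ) + 1)) * |x|) := by
                rw [norm_smul, Real.norm_eq_abs, abs_of_pos hdR]
                exact add_le_add hF (mul_le_mul_of_nonneg_left hG hdR.le)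
            _ = ((d:ℝ)+1) * (ε / (2 * ((d:ℝ) + 1)) * |x|) := by ring
        have h4 : |x|⁻¹ * (((d:ℝ)+1) * (ε / (2 * ((d:ℝ) + 1)) * |x|)) = ε/2 := by
          field_simp
        rw [h4] at h3
        calc |x|⁻¹ * ‖F x - F 0 - (d:ℝ) • (G x - G 0)‖ ≤ ε/2 := h3
          _ < ε := by linarith
    · have hopen : {x : ℝ | x ≠ 0} ∈ nhds r := isOpen_ne.mem_nhds hr
      apply ContinuousAt.congr _ (Filter.eventuallyEq_of_mem hopen fun x hx => (hK0ne x hx).symm)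
      exact (continuousAt_inv₀ hr).smul
        ((hFcont.sub (hGcont.const_smul (d:ℝ) : Continuous fun r => (d:ℝ) • G r)).continuousAt)
  set K : ℝ → EuclideanSpace ℝ (Fin n) :=
    fun r => (fderiv ℝ (gradient V) (v r)) (v1 r) - ((d:ℝ)-1) • K0 r with hKdef
  have hHderiv : ∀ r, HasDerivAt H (K r) r := fun r =>
    (hFderiv r).sub ((hGderiv r).const_smul ((d:ℝ)-1) : HasDerivAt (fun r => ((d:ℝ)-1) • G r) (((d:ℝ)-1) • K0 r) r)
  have hKcont : Continuous K := by
    apply Continuous.sub _ (hK0cont.const_smul ((d:ℝ)-1) : Continuous fun r => ((d:ℝ)-1) • K0 r)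
    exact ((hgradC1.continuous_fderiv one_ne_zero).comp hvcont).clm_apply hv1cont
  have hderivH : deriv H = K := funext fun r => (hHderiv r).deriv
  have hHC1 : ContDiff ℝ 1 H := contDiff_one_iff_deriv.2
    ⟨fun r => (hHderiv r).differentiableAt, by rw [hderivH]; exact hKcont⟩
  have hv1C2 : ContDiff ℝ 2 v1 := by
    rw [show (2 : WithTop ℕ∞) = 1 + 1 by norm_num, contDiff_succ_iff_deriv]
    refine ⟨fun r => (hv1deriv r).differentiableAt, by simp, ?_⟩
    rw [hderivv1]; exact hHC1
  have hvC3 : ContDiff ℝ 3 v := by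
    rw [show (3 : WithTop ℕ∞) = 2 + 1 by norm_num, contDiff_succ_iff_deriv]
    refine ⟨fun r => (hvderiv r).differentiableAt, by simp, ?_⟩
    rw [hderivv]; exact hv1C2
  refine ⟨v, hvC3, hveven, hveq, ?_, ?_, ?_⟩
  · intro r hr
    rw [hderivv, hderivv1]
    show F r - ((d:ℝ)-1) • G r = -(((d:ℝ)-1)/r) • v1 r + gradient V (v r)
    have h1 : -(((d:ℝ)-1)/r) • v1 r = (-((d:ℝ)-1)) • G r := by
      show -(((d:ℝ)-1)/r) • (r • G r) = _
      rw [smul_smul]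
      congr 1
      field_simp
    rw [h1]
    show F r - ((d:ℝ)-1) • G r = (-((d:ℝ)-1)) • G r + F r
    module
  · rw [hderivv]; exact hv10
  · rw [hderivv, hderivv1]
    exact hH0
end
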